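/- arXiv:1707.08225 — 6 statements merged into one kernel-verified Lean document; each statement's English description precedes it below -/
import Mathlib

section
/- Let F̂ and F be graphs such that there is a surjective graph homomorphism ζ: V(F) → V(F̂). Then for every graph H with t(F̂,H) ≥ δ̂ > 0, we have t(F,H) ≥ δ̂^ℓ, where ℓ = (|V(F)|+1)^{|V(F̂)|}. -/
open Finset

open Classical in
noncomputable def indR (p : Prop) : ℝ := if p then 1 else 0

lemma indR_nonneg (p : Prop) : 0 ≤ indR p := by
  unfold indR; split <;> norm_num

lemma indR_le_one (p : Prop) : indR p ≤ 1 := by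
  unfold indR; split <;> norm_num

lemma indR_true {p : Prop} (h : p) : indR p = 1 := by
  unfold indR; exact if_pos h

lemma indR_false {p : Prop} (h : ¬ p) : indR p = 0 := by
  unfold indR; exact if_neg h

lemma indR_congr {p q : Prop} (h : p ↔ q) : indR p = indR q := by
  by_cases hp : p
  · rw [indR_true hp, indR_true (h.mp hp)]
  · rw [indR_false hp, indR_false (fun hq => hp (h.mpr hq))]

lemma indR_mono {p q : Prop} (h : p → q) : indR p ≤ indR q := by
  by_cases hp : p
  · rw [indR_true hp, indR_true (h hp)]
  · rw [indR_false hp]; exact indR_nonneg q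

lemma indR_mul (p q : Prop) : indR p * indR q = indR (p ∧ q) := by
  by_cases hp : p
  · by_cases hq : q
    · rw [indR_true hp, indR_true hq, indR_true ⟨hp, hq⟩]; ring
    · rw [indR_false hq, indR_false (p := p ∧ q) (fun h => hq h.2)]; ring
  · rw [indR_false hp, indR_false (p := p ∧ q) (fun h => hp h.1)]; ring

lemma prod_indR {γ : Type*} [Fintype γ] (r : γ → Prop) :
    ∏ a : γ, indR (r a) = indR (∀ a, r a) := by
  by_cases h : ∀ a, r a
  · rw [indR_true h]
    exact Finset.prod_eq_one fun a _ => indR_true (h a)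
  · push_neg at h
    obtain ⟨a, ha⟩ := h
    rw [indR_false (by push_neg; exact ⟨a, ha⟩)]
    exact Finset.prod_eq_zero (Finset.mem_univ a) (indR_false ha)

lemma sum_indR_pi {γ W : Type*} [DecidableEq γ] [Fintype γ] [Fintype W] (h : γ → W → ℝ) :
    ∑ x : γ → W, ∏ a : γ, h a (x a) = ∏ a : γ, ∑ w : W, h a w :=
  (Fintype.prod_sum (fun a w => h a w)).symm

lemma sum_indR_eq_card {γ : Type*} [Fintype γ] (p : γ → Prop) :
    ∑ g : γ, indR (p g) = (Nat.card {g : γ // p g} : ℝ) := by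
  classical
  rw [Nat.card_eq_fintype_card, Fintype.card_subtype]
  unfold indR
  rw [Finset.sum_boole]

lemma ncard_setOf {γ : Type*} [Fintype γ] (p : γ → Prop) :
    ({g : γ | p g}.ncard : ℝ) = ∑ g : γ, indR (p g) := by
  rw [sum_indR_eq_card, ← Nat.card_coe_set_eq]
  rfl

section Main
variable {α β W : Type*} [Fintype α] [Fintype β] [Fintype W]

open Classical in
noncomputable def colP (ζ : α → β) (rep : β → α) (S : Finset β) (a : α) : α :=
  if ζ a ∈ S then a else rep (ζ a)

open Classical in
noncomputable def cntR (Fhat : SimpleGraph β) (H : SimpleGraph W) (ζ : α → β) (rep : β → α)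
    (S : Finset β) : ℝ :=
  ∑ φ : α → W, indR (∀ a b, Fhat.Adj (ζ a) (ζ b) →
    H.Adj (φ (colP ζ rep S a)) (φ (colP ζ rep S b)))

def condP (Fhat : SimpleGraph β) (H : SimpleGraph W) (ζ : α → β) (rep : β → α)
    (S : Finset β) (v : β) (w : W) (y : α → W) : Prop :=
  ∀ b, Fhat.Adj v (ζ b) → H.Adj w (y (colP ζ rep S b))

def pYP (Fhat : SimpleGraph β) (H : SimpleGraph W) (ζ : α → β) (rep : β → α)
    (S : Finset β) (v : β) (y : α → W) : Prop :=
  ∀ a b, ζ a ≠ v → ζ b ≠ v → Fhat.Adj (ζ a) (ζ b) →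
    H.Adj (y (colP ζ rep S a)) (y (colP ζ rep S b))

open Classical in
noncomputable def mgP (ζ : α → β) (v : β) (x y : α → W) : α → W :=
  fun a => if ζ a = v then x a else y a

open Classical in
lemma step_lemma (Fhat : SimpleGraph β) (H : SimpleGraph W) (ζ : α → β) (rep : β → α)
    (hrep : ∀ u, ζ (rep u) = u) [Nonempty W] (S : Finset β) (v : β) (hv : v ∉ S) :
    (cntR Fhat H ζ rep S / (Fintype.card W : ℝ) ^ (Fintype.card α)) ^
        ((univ.filter fun a => ζ a = v).card)
      ≤ cntR Fhat H ζ rep (insert v S) / (Fintype.card W : ℝ) ^ (Fintype.card α) := by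
  classical
  set q := Fintype.card α with hq
  set n := Fintype.card W with hnn
  have hn : (0:ℝ) < (n:ℝ) := by exact_mod_cast Fintype.card_pos
  set k := (univ.filter fun a => ζ a = v).card with hk
  have hkq : k ≤ q := by rw [hk, hq]; exact (Finset.card_filter_le _ _).trans (by simp)
  have hk1 : 1 ≤ k := by
    rw [hk]
    refine Finset.card_pos.mpr ⟨rep v, ?_⟩
    simp [hrep v]
  -- abbreviations
  set cS : α → α := colP ζ rep S with hcS
  have hζcS : ∀ a, ζ (cS a) = ζ a := by
    intro a; rw [hcS]; unfold colP; split <;> simp [hrep]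
  set cY : (α → W) → ℝ := fun y => ∑ w : W, indR (condP Fhat H ζ rep S v w y) with hcY
  have hcY0 : ∀ y, 0 ≤ cY y := fun y => Finset.sum_nonneg fun w _ => indR_nonneg _
  -- values of merged maps at collapsed points
  have hvalv : ∀ (x y : α → W) a, ζ a = v → mgP ζ v x y (colP ζ rep (insert v S) a) = x a := by
    intro x y a h
    have h1 : colP ζ rep (insert v S) a = a := by unfold colP; rw [if_pos (by simp [h])]
    rw [h1]; unfold mgP; rw [if_pos h]
  have hvaln : ∀ (x y : α → W) a, ζ a ≠ v → mgP ζ v x y (colP ζ rep (insert v S) a) = y (cS a) := by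
    intro x y a h
    have h1 : colP ζ rep (insert v S) a = cS a := by
      rw [hcS]; unfold colP; simp [Finset.mem_insert, h]
    rw [h1]; unfold mgP; rw [if_neg (by rw [hζcS]; exact h)]
  have hvalS : ∀ (x y : α → W) a, ζ a = v → mgP ζ v x y (colP ζ rep S a) = x (rep v) := by
    intro x y a h
    have h1 : colP ζ rep S a = rep v := by unfold colP; rw [if_neg (by rw [h]; exact hv), h]
    rw [h1]; unfold mgP; rw [if_pos (hrep v)]
  have hvalSn : ∀ (x y : α → W) a, ζ a ≠ v → mgP ζ v x y (colP ζ rep S a) = y (cS a) := by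
    intro x y a h
    rw [← hcS]; unfold mgP; rw [if_neg (by rw [hζcS]; exact h)]
  -- the merge double counting
  have emg : ∀ Q : (α → W) → ℝ,
      ∑ p : (α → W) × (α → W), Q (mgP ζ v p.1 p.2) = (n:ℝ) ^ q * ∑ φ : α → W, Q φ := by
    intro Q
    have mg_invol : ∀ p : (α → W) × (α → W),
        (mgP ζ v (mgP ζ v p.1 p.2) (mgP ζ v p.2 p.1),
         mgP ζ v (mgP ζ v p.2 p.1) (mgP ζ v p.1 p.2)) = p := by
      intro p
      have e1 : mgP ζ v (mgP ζ v p.1 p.2) (mgP ζ v p.2 p.1) = p.1 := by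
        funext a; unfold mgP; by_cases h : ζ a = v <;> simp [h]
      have e2 : mgP ζ v (mgP ζ v p.2 p.1) (mgP ζ v p.1 p.2) = p.2 := by
        funext a; unfold mgP; by_cases h : ζ a = v <;> simp [h]
      rw [e1, e2]
    let e : ((α → W) × (α → W)) ≃ ((α → W) × (α → W)) :=
      ⟨fun p => (mgP ζ v p.1 p.2, mgP ζ v p.2 p.1),
       fun p => (mgP ζ v p.1 p.2, mgP ζ v p.2 p.1), mg_invol, mg_invol⟩
    calc ∑ p : (α → W) × (α → W), Q (mgP ζ v p.1 p.2)
        = ∑ p : (α → W) × (α → W), Q p.1 := Fintype.sum_equiv e _ _ (fun p => rfl)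
      _ = ∑ x : α → W, ∑ _y : α → W, Q x := by exact Fintype.sum_prod_type _
      _ = (n:ℝ) ^ q * ∑ x : α → W, Q x := by
          simp only [Finset.sum_const, Finset.card_univ, nsmul_eq_mul, ← Finset.sum_mul]
          rw [Fintype.card_fun, ← Finset.mul_sum]
          push_cast
          ring
  -- pointwise Claim A
  have claimA : ∀ x y : α → W,
      indR (∀ a b, Fhat.Adj (ζ a) (ζ b) →
          H.Adj (mgP ζ v x y (colP ζ rep (insert v S) a)) (mgP ζ v x y (colP ζ rep (insert v S) b)))
        = indR (pYP Fhat H ζ rep S v y) *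
            ∏ a : α, (if ζ a = v then indR (condP Fhat H ζ rep S v (x a) y) else 1) := by
    intro x y
    have hfac : ∀ a : α, (if ζ a = v then indR (condP Fhat H ζ rep S v (x a) y) else 1)
        = indR (ζ a = v → condP Fhat H ζ rep S v (x a) y) := by
      intro a
      by_cases h : ζ a = v
      · rw [if_pos h]; exact indR_congr ⟨fun hc _ => hc, fun hc => hc h⟩
      · rw [if_neg h, indR_true (fun h' => absurd h' h)]
    rw [Finset.prod_congr rfl (fun a _ => hfac a), prod_indR, indR_mul]
    apply indR_congr
    constructor
    · intro hP
      refine ⟨fun a b ha hb hadj => ?_, fun a ha b hadj => ?_⟩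
      · have := hP a b hadj
        rwa [hvaln x y a ha, hvaln x y b hb] at this
      · have hb : ζ b ≠ v := fun h => Fhat.irrefl (by rw [h] at hadj; exact hadj)
        have := hP a b (by rw [ha]; exact hadj)
        rwa [hvalv x y a ha, hvaln x y b hb] at this
    · rintro ⟨hpy, hcnd⟩ a b hadj
      by_cases ha : ζ a = v
      · by_cases hb : ζ b = v
        · exact absurd hadj (by rw [ha, hb]; exact Fhat.irrefl)
        · rw [hvalv x y a ha, hvaln x y b hb]
          exact hcnd a ha b (by rw [← ha]; exact hadj)
      · by_cases hb : ζ b = v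
        · rw [hvaln x y a ha, hvalv x y b hb]
          exact (hcnd b hb a (by rw [← hb]; exact hadj.symm)).symm
        · rw [hvaln x y a ha, hvaln x y b hb]
          exact hpy a b ha hb hadj
  -- pointwise Claim B
  have claimB : ∀ x y : α → W,
      indR (∀ a b, Fhat.Adj (ζ a) (ζ b) →
          H.Adj (mgP ζ v x y (colP ζ rep S a)) (mgP ζ v x y (colP ζ rep S b)))
        = indR (pYP Fhat H ζ rep S v y) *
            ∏ a : α, (if a = rep v then indR (condP Fhat H ζ rep S v (x a) y) else 1) := by
    intro x y
    have hfac : ∏ a : α, (if a = rep v then indR (condP Fhat H ζ rep S v (x a) y) else 1)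
        = indR (condP Fhat H ζ rep S v (x (rep v)) y) := by
      rw [Finset.prod_ite_eq' univ (rep v) (fun a => indR (condP Fhat H ζ rep S v (x a) y)),
        if_pos (Finset.mem_univ _)]
    rw [hfac, indR_mul]
    apply indR_congr
    constructor
    · intro hP
      refine ⟨fun a b ha hb hadj => ?_, fun b hadj => ?_⟩
      · have := hP a b hadj
        rwa [hvalSn x y a ha, hvalSn x y b hb] at this
      · have hb : ζ b ≠ v := fun h => Fhat.irrefl (by rw [h] at hadj; exact hadj)
        have := hP (rep v) b (by rw [hrep v]; exact hadj)
        rwa [hvalS x y (rep v) (hrep v), hvalSn x y b hb] at this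
    · rintro ⟨hpy, hcnd⟩ a b hadj
      by_cases ha : ζ a = v
      · by_cases hb : ζ b = v
        · exact absurd hadj (by rw [ha, hb]; exact Fhat.irrefl)
        · rw [hvalS x y a ha, hvalSn x y b hb]
          exact hcnd b (by rw [← ha]; exact hadj)
      · by_cases hb : ζ b = v
        · rw [hvalSn x y a ha, hvalS x y b hb]
          exact (hcnd a (by rw [← hb]; exact hadj.symm)).symm
        · rw [hvalSn x y a ha, hvalSn x y b hb]
          exact hpy a b ha hb hadj
  -- product evaluation helpers
  have hcardneg : (univ.filter fun a : α => ¬ ζ a = v).card = q - k := by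
    have := Finset.card_filter_add_card_filter_not (s := (univ : Finset α))
      (p := fun a => ζ a = v)
    rw [Finset.card_univ] at this
    omega
  have hprod1 : ∀ c : ℝ, ∏ a : α, (if ζ a = v then c else (n:ℝ)) = c ^ k * (n:ℝ) ^ (q - k) := by
    intro c
    rw [Finset.prod_ite, Finset.prod_const, Finset.prod_const, ← hk, hcardneg]
  have hcardrep : (univ.filter fun a : α => a = rep v).card = 1 := by
    have : (univ.filter fun a : α => a = rep v) = {rep v} := by ext a; simp
    rw [this, Finset.card_singleton]
  have hcardrepneg : (univ.filter fun a : α => ¬ a = rep v).card = q - 1 := by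
    have := Finset.card_filter_add_card_filter_not (s := (univ : Finset α))
      (p := fun a => a = rep v)
    rw [Finset.card_univ] at this
    omega
  have hprod2 : ∀ c : ℝ, ∏ a : α, (if a = rep v then c else (n:ℝ)) = c * (n:ℝ) ^ (q - 1) := by
    intro c
    rw [Finset.prod_ite, Finset.prod_const, Finset.prod_const, hcardrep, hcardrepneg, pow_one]
  -- key identity E1
  have E1 : (n:ℝ) ^ q * cntR Fhat H ζ rep (insert v S)
      = (n:ℝ) ^ (q - k) * ∑ y : α → W, indR (pYP Fhat H ζ rep S v y) * cY y ^ k := by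
    unfold cntR
    rw [← emg, Fintype.sum_prod_type, Finset.sum_comm, Finset.mul_sum]
    refine Finset.sum_congr rfl fun y _ => ?_
    calc ∑ x : α → W, indR (∀ a b, Fhat.Adj (ζ a) (ζ b) →
            H.Adj (mgP ζ v x y (colP ζ rep (insert v S) a)) (mgP ζ v x y (colP ζ rep (insert v S) b)))
        = ∑ x : α → W, indR (pYP Fhat H ζ rep S v y) *
            ∏ a : α, (if ζ a = v then indR (condP Fhat H ζ rep S v (x a) y) else 1) :=
          Finset.sum_congr rfl fun x _ => claimA x y
      _ = indR (pYP Fhat H ζ rep S v y) *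
            ∑ x : α → W, ∏ a : α, (if ζ a = v then indR (condP Fhat H ζ rep S v (x a) y) else 1) := by
          rw [Finset.mul_sum]
      _ = indR (pYP Fhat H ζ rep S v y) *
            ∏ a : α, ∑ w : W, (if ζ a = v then indR (condP Fhat H ζ rep S v w y) else 1) := by
          rw [sum_indR_pi (fun a w => if ζ a = v then indR (condP Fhat H ζ rep S v w y) else 1)]
      _ = indR (pYP Fhat H ζ rep S v y) * ∏ a : α, (if ζ a = v then cY y else (n:ℝ)) := by
          congr 1
          refine Finset.prod_congr rfl fun a _ => ?_
          by_cases h : ζ a = v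
          · rw [if_pos h]
            simp only [if_pos h]
            rfl
          · simp only [if_neg h]
            rw [Finset.sum_const, Finset.card_univ, nsmul_eq_mul, mul_one, hnn]
      _ = (n:ℝ) ^ (q - k) * (indR (pYP Fhat H ζ rep S v y) * cY y ^ k) := by
          rw [hprod1]; ring
  -- key identity E2
  have E2 : (n:ℝ) ^ q * cntR Fhat H ζ rep S
      = (n:ℝ) ^ (q - 1) * ∑ y : α → W, indR (pYP Fhat H ζ rep S v y) * cY y := by
    unfold cntR
    rw [← emg, Fintype.sum_prod_type, Finset.sum_comm, Finset.mul_sum]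
    refine Finset.sum_congr rfl fun y _ => ?_
    calc ∑ x : α → W, indR (∀ a b, Fhat.Adj (ζ a) (ζ b) →
            H.Adj (mgP ζ v x y (colP ζ rep S a)) (mgP ζ v x y (colP ζ rep S b)))
        = ∑ x : α → W, indR (pYP Fhat H ζ rep S v y) *
            ∏ a : α, (if a = rep v then indR (condP Fhat H ζ rep S v (x a) y) else 1) :=
          Finset.sum_congr rfl fun x _ => claimB x y
      _ = indR (pYP Fhat H ζ rep S v y) *
            ∑ x : α → W, ∏ a : α, (if a = rep v then indR (condP Fhat H ζ rep S v (x a) y) else 1) := by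
          rw [Finset.mul_sum]
      _ = indR (pYP Fhat H ζ rep S v y) *
            ∏ a : α, ∑ w : W, (if a = rep v then indR (condP Fhat H ζ rep S v w y) else 1) := by
          rw [sum_indR_pi (fun a w => if a = rep v then indR (condP Fhat H ζ rep S v w y) else 1)]
      _ = indR (pYP Fhat H ζ rep S v y) * ∏ a : α, (if a = rep v then cY y else (n:ℝ)) := by
          congr 1
          refine Finset.prod_congr rfl fun a _ => ?_
          by_cases h : a = rep v
          · rw [if_pos h]
            simp only [if_pos h]
            rfl
          · simp only [if_neg h]
            rw [Finset.sum_const, Finset.card_univ, nsmul_eq_mul, mul_one, hnn]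
      _ = (n:ℝ) ^ (q - 1) * (indR (pYP Fhat H ζ rep S v y) * cY y) := by
          rw [hprod2]; ring
  -- group the y-sums over the set T of admissible y
  set T := (univ : Finset (α → W)).filter (fun y => pYP Fhat H ζ rep S v y) with hT
  have hsum1 : ∑ y : α → W, indR (pYP Fhat H ζ rep S v y) * cY y ^ k = ∑ y ∈ T, cY y ^ k := by
    rw [hT, Finset.sum_filter]
    refine Finset.sum_congr rfl fun y _ => ?_
    by_cases h : pYP Fhat H ζ rep S v y
    · rw [indR_true h, if_pos h, one_mul]
    · rw [indR_false h, if_neg h, zero_mul]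
  have hsum0 : ∑ y : α → W, indR (pYP Fhat H ζ rep S v y) * cY y = ∑ y ∈ T, cY y := by
    rw [hT, Finset.sum_filter]
    refine Finset.sum_congr rfl fun y _ => ?_
    by_cases h : pYP Fhat H ζ rep S v y
    · rw [indR_true h, if_pos h, one_mul]
    · rw [indR_false h, if_neg h, zero_mul]
  have hA1cnt : cntR Fhat H ζ rep (insert v S) * (n:ℝ) ^ k = ∑ y ∈ T, cY y ^ k := by
    have hp : (n:ℝ) ^ (q - k) * (n:ℝ) ^ k = (n:ℝ) ^ q := by
      rw [← pow_add]; congr 1; omega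
    apply mul_left_cancel₀ (show ((n:ℝ) ^ (q - k)) ≠ 0 by positivity)
    calc (n:ℝ) ^ (q - k) * (cntR Fhat H ζ rep (insert v S) * (n:ℝ) ^ k)
        = (n:ℝ) ^ q * cntR Fhat H ζ rep (insert v S) := by rw [← hp]; ring
      _ = (n:ℝ) ^ (q - k) * ∑ y ∈ T, cY y ^ k := by rw [E1, hsum1]
  have hA0cnt : cntR Fhat H ζ rep S * (n:ℝ) = ∑ y ∈ T, cY y := by
    have hp : (n:ℝ) ^ (q - 1) * (n:ℝ) = (n:ℝ) ^ q := by
      rw [← pow_succ]; congr 1; omega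
    apply mul_left_cancel₀ (show ((n:ℝ) ^ (q - 1)) ≠ 0 by positivity)
    calc (n:ℝ) ^ (q - 1) * (cntR Fhat H ζ rep S * (n:ℝ))
        = (n:ℝ) ^ q * cntR Fhat H ζ rep S := by rw [← hp]; ring
      _ = (n:ℝ) ^ (q - 1) * ∑ y ∈ T, cY y := by rw [E2, hsum0]
  have hA1 : (0:ℝ) ≤ ∑ y ∈ T, cY y ^ k :=
    Finset.sum_nonneg fun y _ => pow_nonneg (hcY0 y) k
  -- Hölder
  have holder : (∑ y ∈ T, cY y) ^ k ≤ (∑ y ∈ T, cY y ^ k) * ((T.card : ℝ)) ^ (k - 1) := by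
    rcases Finset.eq_empty_or_nonempty T with hTe | hTne
    · rw [hTe]
      simp only [Finset.sum_empty]
      rw [zero_pow (by omega : k ≠ 0), zero_mul]
    · have hTpos : (0:ℝ) < (T.card:ℝ) ^ (k - 1) := by
        have h0 : 0 < T.card := Finset.card_pos.mpr hTne
        have : (0:ℝ) < (T.card:ℝ) := by exact_mod_cast h0
        positivity
      have h := pow_sum_div_card_le_sum_pow (s := T) (f := cY) (fun y _ => hcY0 y) (k - 1)
      rw [show k - 1 + 1 = k from by omega] at h
      calc (∑ y ∈ T, cY y) ^ k
          = ((∑ y ∈ T, cY y) ^ k / (T.card:ℝ) ^ (k - 1)) * (T.card:ℝ) ^ (k - 1) := by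
            field_simp
        _ ≤ (∑ y ∈ T, cY y ^ k) * (T.card:ℝ) ^ (k - 1) :=
            mul_le_mul_of_nonneg_right h hTpos.le
  have hTcard : ((T.card:ℝ)) ^ (k - 1) ≤ ((n:ℝ) ^ q) ^ (k - 1) := by
    apply pow_le_pow_left₀ (by positivity)
    have h1 : T.card ≤ Fintype.card (α → W) := by
      rw [← Finset.card_univ]; exact Finset.card_filter_le _ _
    rw [Fintype.card_fun] at h1
    calc (T.card : ℝ) ≤ ((n ^ q : ℕ) : ℝ) := by exact_mod_cast h1
      _ = (n:ℝ) ^ q := by push_cast; ring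
  have key : (∑ y ∈ T, cY y) ^ k ≤ (∑ y ∈ T, cY y ^ k) * ((n:ℝ) ^ q) ^ (k - 1) :=
    holder.trans (mul_le_mul_of_nonneg_left hTcard hA1)
  -- final algebra
  rw [div_pow, div_le_div_iff₀ (by positivity) (by positivity),
    ← mul_le_mul_iff_of_pos_right (pow_pos hn k)]
  calc cntR Fhat H ζ rep S ^ k * (n:ℝ) ^ q * (n:ℝ) ^ k
      = (cntR Fhat H ζ rep S * (n:ℝ)) ^ k * (n:ℝ) ^ q := by rw [mul_pow]; ring
    _ = (∑ y ∈ T, cY y) ^ k * (n:ℝ) ^ q := by rw [hA0cnt]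
    _ ≤ ((∑ y ∈ T, cY y ^ k) * ((n:ℝ) ^ q) ^ (k - 1)) * (n:ℝ) ^ q :=
        mul_le_mul_of_nonneg_right key (by positivity)
    _ = (∑ y ∈ T, cY y ^ k) * ((n:ℝ) ^ q) ^ k := by
        rw [mul_assoc]
        congr 1
        rw [← pow_succ]
        congr 1
        omega
    _ = cntR Fhat H ζ rep (insert v S) * (n:ℝ) ^ k * ((n:ℝ) ^ q) ^ k := by rw [hA1cnt]
    _ = cntR Fhat H ζ rep (insert v S) * ((n:ℝ) ^ q) ^ k * (n:ℝ) ^ k := by ring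


open Classical in
lemma base_lemma (Fhat : SimpleGraph β) (H : SimpleGraph W) (ζ : α → β) (rep : β → α)
    (hrep : ∀ u, ζ (rep u) = u) :
    (Nat.card {ψ : β → W // ∀ u u', Fhat.Adj u u' → H.Adj (ψ u) (ψ u')} : ℝ) *
      (Fintype.card W : ℝ) ^ (Fintype.card α - Fintype.card β) ≤ cntR Fhat H ζ rep ∅ := by
  classical
  have hrepinj : Function.Injective rep := fun u u' h => by
    rw [← hrep u, ← hrep u', h]
  have hcnt : cntR Fhat H ζ rep ∅ = (Nat.card {φ : α → W // ∀ a b, Fhat.Adj (ζ a) (ζ b) →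
      H.Adj (φ (colP ζ rep ∅ a)) (φ (colP ζ rep ∅ b))} : ℝ) := by
    unfold cntR
    rw [sum_indR_eq_card]
  rw [hcnt]
  -- build an injection
  have hmem : ∀ (p : {ψ : β → W // ∀ u u', Fhat.Adj u u' → H.Adj (ψ u) (ψ u')} ×
      ({a : α // a ∉ Set.range rep} → W)),
      (∀ a b, Fhat.Adj (ζ a) (ζ b) →
        H.Adj ((fun a => if h : a ∈ Set.range rep then p.1.1 (ζ a) else p.2 ⟨a, h⟩) (colP ζ rep ∅ a))
          ((fun a => if h : a ∈ Set.range rep then p.1.1 (ζ a) else p.2 ⟨a, h⟩) (colP ζ rep ∅ b))) := by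
    rintro ⟨⟨ψ, hψ⟩, χ⟩ a b hadj
    have hcol : ∀ c : α, colP ζ rep ∅ c = rep (ζ c) := by
      intro c; unfold colP; rw [if_neg (Finset.notMem_empty _)]
    have hval : ∀ c : α,
        (fun a => if h : a ∈ Set.range rep then ψ (ζ a) else χ ⟨a, h⟩) (rep (ζ c)) = ψ (ζ c) := by
      intro c
      simp only
      rw [dif_pos ⟨ζ c, rfl⟩, hrep]
    rw [hcol, hcol, hval, hval]
    exact hψ _ _ hadj
  set Φ : {ψ : β → W // ∀ u u', Fhat.Adj u u' → H.Adj (ψ u) (ψ u')} ×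
      ({a : α // a ∉ Set.range rep} → W) →
      {φ : α → W // ∀ a b, Fhat.Adj (ζ a) (ζ b) →
        H.Adj (φ (colP ζ rep ∅ a)) (φ (colP ζ rep ∅ b))} :=
    fun p => ⟨fun a => if h : a ∈ Set.range rep then p.1.1 (ζ a) else p.2 ⟨a, h⟩, hmem p⟩ with hΦ
  have hinj : Function.Injective Φ := by
    rintro ⟨⟨ψ, hψ⟩, χ⟩ ⟨⟨ψ', hψ'⟩, χ'⟩ h
    have h1 : ∀ a : α, (if h : a ∈ Set.range rep then ψ (ζ a) else χ ⟨a, h⟩)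
        = (if h : a ∈ Set.range rep then ψ' (ζ a) else χ' ⟨a, h⟩) := by
      intro a
      have := congrArg Subtype.val h
      exact congrFun this a
    have hψeq : ψ = ψ' := by
      funext u
      have := h1 (rep u)
      rwa [dif_pos ⟨u, rfl⟩, dif_pos ⟨u, rfl⟩, hrep] at this
    have hχeq : χ = χ' := by
      funext a
      obtain ⟨a, ha⟩ := a
      have := h1 a
      rwa [dif_neg ha, dif_neg ha] at this
    simp [hψeq, hχeq]
  have hcard := Fintype.card_le_of_injective Φ hinj
  rw [Fintype.card_prod] at hcard
  have hcard2 : Fintype.card ({a : α // a ∉ Set.range rep} → W)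
      = Fintype.card W ^ (Fintype.card α - Fintype.card β) := by
    rw [Fintype.card_fun]
    congr 1
    rw [Fintype.card_subtype_compl]
    congr 1
    have h1 : Fintype.card {a : α // a ∈ Set.range rep} = Fintype.card (Set.range rep) :=
      Fintype.card_congr (Equiv.refl _)
    rw [h1]
    simpa using Set.card_range_of_injective hrepinj
  rw [hcard2] at hcard
  have : (Nat.card {ψ : β → W // ∀ u u', Fhat.Adj u u' → H.Adj (ψ u) (ψ u')} : ℝ) *
      ((Fintype.card W : ℝ)) ^ (Fintype.card α - Fintype.card β)
      = ((Fintype.card {ψ : β → W // ∀ u u', Fhat.Adj u u' → H.Adj (ψ u) (ψ u')} *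
          Fintype.card W ^ (Fintype.card α - Fintype.card β) : ℕ) : ℝ) := by
    rw [Nat.card_eq_fintype_card]
    push_cast
    ring
  rw [this]
  rw [Nat.card_eq_fintype_card]
  exact_mod_cast hcard

end Main

/-- Homomorphism density of `F` in `H`: the fraction of all maps `V(F) → V(H)` that send
every edge of `F` to an edge of `H`. -/
noncomputable def homDensity {α β : Type*} [Fintype α] [Fintype β]
    (F : SimpleGraph α) (H : SimpleGraph β) : ℝ :=
  (Set.ncard {φ : α → β | ∀ a b, F.Adj a b → H.Adj (φ a) (φ b)} : ℝ) /
    ((Fintype.card β : ℝ) ^ (Fintype.card α))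

/-- If there is a surjective graph homomorphism `ζ : V(F) → V(F̂)`, then for every graph `H`
with `t(F̂,H) ≥ δ̂ > 0` we have `t(F,H) ≥ δ̂ ^ ℓ` with `ℓ = (|V(F)|+1)^{|V(F̂)|}`. -/
theorem stmt2 {α β W : Type*} [Fintype α] [Fintype β] [Fintype W]
    (F : SimpleGraph α) (Fhat : SimpleGraph β) (ζ : α → β)
    (hsurj : Function.Surjective ζ)
    (hhom : ∀ a b, F.Adj a b → Fhat.Adj (ζ a) (ζ b))
    (H : SimpleGraph W) (δhat : ℝ) (hδ : 0 < δhat)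
    (ht : homDensity Fhat H ≥ δhat) :
    homDensity F H ≥ δhat ^ ((Fintype.card α + 1) ^ (Fintype.card β)) := by
  classical
  rw [ge_iff_le]
  by_cases hW : Nonempty W
  · haveI := hW
    have hn : (0:ℝ) < (Fintype.card W : ℝ) := by
      have := Fintype.card_pos (α := W)
      exact_mod_cast this
    set rep : β → α := Function.surjInv hsurj with hrepdef
    have hrep : ∀ u, ζ (rep u) = u := fun u => Function.surjInv_eq hsurj u
    have hba : Fintype.card β ≤ Fintype.card α := Fintype.card_le_of_surjective ζ hsurj
    have hFhat_eq : homDensity Fhat H =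
        (Nat.card {ψ : β → W // ∀ u u', Fhat.Adj u u' → H.Adj (ψ u) (ψ u')} : ℝ) /
          (Fintype.card W : ℝ) ^ (Fintype.card β) := by
      unfold homDensity
      rw [ncard_setOf, sum_indR_eq_card]
    have hFhat_le : homDensity Fhat H ≤ 1 := by
      rw [hFhat_eq, div_le_one (by positivity)]
      rw [← sum_indR_eq_card]
      calc ∑ ψ : β → W, indR _ ≤ ∑ _ψ : β → W, (1:ℝ) :=
            Finset.sum_le_sum fun ψ _ => indR_le_one _
        _ = (Fintype.card (β → W) : ℝ) := by simp
        _ = (Fintype.card W : ℝ) ^ (Fintype.card β) := by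
            rw [Fintype.card_fun]; push_cast; ring
    have hδ1 : δhat ≤ 1 := le_trans ht hFhat_le
    have hnum : δhat * (Fintype.card W : ℝ) ^ (Fintype.card β) ≤
        (Nat.card {ψ : β → W // ∀ u u', Fhat.Adj u u' → H.Adj (ψ u) (ψ u')} : ℝ) := by
      rw [hFhat_eq] at ht
      exact (le_div_iff₀ (by positivity)).mp ht
    have hbase : δhat ≤ cntR Fhat H ζ rep ∅ / (Fintype.card W : ℝ) ^ (Fintype.card α) := by
      rw [le_div_iff₀ (by positivity)]
      calc δhat * (Fintype.card W : ℝ) ^ (Fintype.card α)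
          = (δhat * (Fintype.card W : ℝ) ^ (Fintype.card β)) *
              (Fintype.card W : ℝ) ^ (Fintype.card α - Fintype.card β) := by
            rw [mul_assoc, ← pow_add]
            congr 2
            omega
        _ ≤ (Nat.card {ψ : β → W // ∀ u u', Fhat.Adj u u' → H.Adj (ψ u) (ψ u')} : ℝ) *
              (Fintype.card W : ℝ) ^ (Fintype.card α - Fintype.card β) :=
            mul_le_mul_of_nonneg_right hnum (by positivity)
        _ ≤ cntR Fhat H ζ rep ∅ := base_lemma Fhat H ζ rep hrep
    have hind : ∀ S : Finset β,
        δhat ^ (∏ u ∈ S, (univ.filter fun a => ζ a = u).card)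
          ≤ cntR Fhat H ζ rep S / (Fintype.card W : ℝ) ^ (Fintype.card α) := by
      intro S
      induction S using Finset.induction_on with
      | empty => simpa using hbase
      | @insert v S hvS ih =>
        rw [Finset.prod_insert hvS, mul_comm, pow_mul]
        calc (δhat ^ (∏ u ∈ S, (univ.filter fun a => ζ a = u).card)) ^
                ((univ.filter fun a => ζ a = v).card)
            ≤ (cntR Fhat H ζ rep S / (Fintype.card W : ℝ) ^ (Fintype.card α)) ^
                ((univ.filter fun a => ζ a = v).card) :=
              pow_le_pow_left₀ (pow_nonneg hδ.le _) ih _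
          _ ≤ cntR Fhat H ζ rep (insert v S) / (Fintype.card W : ℝ) ^ (Fintype.card α) :=
              step_lemma Fhat H ζ rep hrep S v hvS
    have huniv := hind univ
    have hcol_univ : ∀ a : α, colP ζ rep (univ : Finset β) a = a := by
      intro a; unfold colP; rw [if_pos (Finset.mem_univ _)]
    have hmono : cntR Fhat H ζ rep univ ≤
        ({φ : α → W | ∀ a b, F.Adj a b → H.Adj (φ a) (φ b)}.ncard : ℝ) := by
      rw [ncard_setOf]
      unfold cntR
      refine Finset.sum_le_sum fun φ _ => indR_mono fun hP a b hab => ?_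
      have := hP a b (hhom a b hab)
      rwa [hcol_univ, hcol_univ] at this
    have hprodle : (∏ u : β, (univ.filter fun a => ζ a = u).card)
        ≤ (Fintype.card α + 1) ^ (Fintype.card β) := by
      calc ∏ u : β, (univ.filter fun a => ζ a = u).card
          ≤ (Fintype.card α + 1) ^ (univ : Finset β).card :=
            Finset.prod_le_pow_card _ _ _ fun u _ => by
              have := Finset.card_filter_le (univ : Finset α) (fun a => ζ a = u)
              rw [Finset.card_univ] at this
              omega
        _ = (Fintype.card α + 1) ^ (Fintype.card β) := by rw [Finset.card_univ]
    calc δhat ^ ((Fintype.card α + 1) ^ (Fintype.card β))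
        ≤ δhat ^ (∏ u : β, (univ.filter fun a => ζ a = u).card) :=
          pow_le_pow_of_le_one hδ.le hδ1 hprodle
      _ ≤ cntR Fhat H ζ rep univ / (Fintype.card W : ℝ) ^ (Fintype.card α) := huniv
      _ ≤ homDensity F H := by
          unfold homDensity
          exact div_le_div_of_nonneg_right hmono (by positivity)
  · have hWe : IsEmpty W := not_nonempty_iff.mp hW
    by_cases hβ : Nonempty β
    · exfalso
      haveI : IsEmpty (β → W) := by
        obtain ⟨u⟩ := hβ
        exact ⟨fun f => hWe.false (f u)⟩
      have h0 : homDensity Fhat H = 0 := by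
        unfold homDensity
        rw [Set.eq_empty_of_isEmpty ({ψ : β → W | ∀ a b, Fhat.Adj a b → H.Adj (ψ a) (ψ b)}),
          Set.ncard_empty]
        simp
      rw [h0] at ht; linarith
    · have hβe : IsEmpty β := not_nonempty_iff.mp hβ
      haveI := hβe
      haveI hαe : IsEmpty α := Function.isEmpty ζ
      have hα0 : Fintype.card α = 0 := Fintype.card_eq_zero
      have hβ0 : Fintype.card β = 0 := Fintype.card_eq_zero
      have hFone : homDensity F H = 1 := by
        unfold homDensity
        have huniv : {φ : α → W | ∀ a b, F.Adj a b → H.Adj (φ a) (φ b)} = Set.univ :=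
          Set.eq_univ_of_forall fun φ a => isEmptyElim a
        rw [huniv, Set.ncard_univ, Nat.card_unique, hα0, pow_zero]
        norm_num
      have hhatone : homDensity Fhat H = 1 := by
        unfold homDensity
        have huniv : {ψ : β → W | ∀ a b, Fhat.Adj a b → H.Adj (ψ a) (ψ b)} = Set.univ :=
          Set.eq_univ_of_forall fun ψ a => isEmptyElim a
        rw [huniv, Set.ncard_univ, Nat.card_unique, hβ0, pow_zero]
        norm_num
      rw [hFone, hα0, hβ0, pow_zero, pow_one]
      rw [hhatone] at ht
      exact ht
end

section
/- Let G₁, G₂ be graphs on the same vertex set V with |V| = n > 2k, and let 𝒱 = {V_1,...,V_k} be an equipartition of V into exactly k classes (so each |V_i| ≥ n/k - 1, in particular |V_i| ≥ (n-k)/k). Then the distance between the cluster graphs satisfies dist(G₁/𝒱, G₂/𝒱) ≤ (1 + 2k/(n-2k)) · dist(G₁,G₂). -/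
open Finset

attribute [local instance] Classical.propDecidable

/-- The cluster-graph edge weight: density of ordered adjacent pairs between classes. -/
noncomputable def clusterW {V : Type*} {k : ℕ} (G : SimpleGraph V)
    (P : Fin k → Finset V) (i j : Fin k) : ℝ :=
  ((((P i) ×ˢ (P j)).filter fun p => G.Adj p.1 p.2).card : ℝ) /
    (((P i).card : ℝ) * ((P j).card : ℝ))

/-- Normalized edit distance between two graphs on the same vertex set
(as 0/1-valued weighted graphs). -/
noncomputable def distG {V : Type*} [Fintype V] (G₁ G₂ : SimpleGraph V) : ℝ :=
  (∑ u : V, ∑ v : V,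
      |(if G₁.Adj u v then (1 : ℝ) else 0) - (if G₂.Adj u v then (1 : ℝ) else 0)|) /
    ((Fintype.card V : ℝ) ^ 2)

/-- Normalized distance between two weighted graphs on `[k]`. -/
noncomputable def distWk {k : ℕ} (R R' : Fin k → Fin k → ℝ) : ℝ :=
  (∑ i : Fin k, ∑ j : Fin k, |R i j - R' i j|) / ((k : ℝ) ^ 2)

/-- For an equipartition `𝒱` into exactly `k` classes of a vertex set of size `n > 2k`,
`dist(G₁/𝒱, G₂/𝒱) ≤ (1 + 2k/(n-2k)) · dist(G₁,G₂)`. -/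
theorem stmt5 {V : Type*} [Fintype V] [DecidableEq V] (G₁ G₂ : SimpleGraph V)
    {k : ℕ} (hk : 0 < k) (P : Fin k → Finset V)
    (hdisj : ∀ i j, i ≠ j → Disjoint (P i) (P j))
    (hcover : Finset.univ.biUnion P = Finset.univ)
    (hsize : ∀ i j, (P i).card ≤ (P j).card + 1)
    (hn : 2 * k < Fintype.card V) :
    distWk (clusterW G₁ P) (clusterW G₂ P) ≤
      (1 + 2 * (k : ℝ) / ((Fintype.card V : ℝ) - 2 * k)) * distG G₁ G₂ := by
  classical
  set n := Fintype.card V with hndef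
  have hkR : (0:ℝ) < k := by exact_mod_cast hk
  have hnR : (2*(k:ℝ)) < n := by exact_mod_cast hn
  have hnk2 : (0:ℝ) < (n:ℝ) - 2*k := by linarith
  have hnk : (0:ℝ) < (n:ℝ) - k := by linarith
  set f : V → V → ℝ := fun u v =>
    |(if G₁.Adj u v then (1 : ℝ) else 0) - (if G₂.Adj u v then (1 : ℝ) else 0)| with hf
  have hf0 : ∀ u v, 0 ≤ f u v := fun u v => abs_nonneg _
  have hdisjP : ((Finset.univ : Finset (Fin k)) : Set (Fin k)).PairwiseDisjoint P := by
    intro i _ j _ hij; exact hdisj i j hij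
  have hsum : ∑ i, (P i).card = n := by
    rw [← Finset.card_biUnion (fun i _ j _ hij => hdisj i j hij), hcover, hndef,
      Finset.card_univ]
  have hmlb : ∀ i, ((n : ℝ) - k) / k ≤ ((P i).card : ℝ) := by
    intro i
    rw [div_le_iff₀ hkR]
    have h1 : n ≤ k * (P i).card + k := by
      calc n = ∑ j, (P j).card := hsum.symm
        _ ≤ ∑ _j : Fin k, ((P i).card + 1) :=
            Finset.sum_le_sum (fun j _ => hsize j i)
        _ = k * (P i).card + k := by
            rw [Finset.sum_const, Finset.card_univ, Fintype.card_fin, smul_eq_mul]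
            ring
    have h1R : (n:ℝ) ≤ k * (P i).card + k := by exact_mod_cast h1
    linarith
  have hmpos : ∀ i, (0:ℝ) < ((P i).card : ℝ) := fun i =>
    lt_of_lt_of_le (div_pos hnk hkR) (hmlb i)
  -- per-pair bound
  have key : ∀ i j, |clusterW G₁ P i j - clusterW G₂ P i j| ≤
      (∑ u ∈ P i, ∑ v ∈ P j, f u v) * ((k:ℝ)^2 / ((n:ℝ)-k)^2) := by
    intro i j
    have hmi := hmlb i
    have hmj := hmlb j
    have hmipos := hmpos i
    have hmjpos := hmpos j
    have hdiff : clusterW G₁ P i j - clusterW G₂ P i j =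
        (∑ p ∈ (P i) ×ˢ (P j),
          ((if G₁.Adj p.1 p.2 then (1:ℝ) else 0) - (if G₂.Adj p.1 p.2 then (1:ℝ) else 0)))
          / (((P i).card:ℝ) * ((P j).card:ℝ)) := by
      rw [clusterW, clusterW, div_sub_div_same]
      congr 1
      rw [Finset.sum_sub_distrib, Finset.sum_boole, Finset.sum_boole]
    have habs : |clusterW G₁ P i j - clusterW G₂ P i j| ≤
        (∑ p ∈ (P i) ×ˢ (P j), f p.1 p.2) / (((P i).card:ℝ) * ((P j).card:ℝ)) := by
      rw [hdiff, abs_div, abs_of_pos (mul_pos hmipos hmjpos)]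
      gcongr
      exact Finset.abs_sum_le_sum_abs _ _
    rw [Finset.sum_product] at habs
    refine habs.trans ?_
    rw [div_eq_mul_one_div]
    apply mul_le_mul_of_nonneg_left ?_
      (Finset.sum_nonneg fun u _ => Finset.sum_nonneg fun v _ => hf0 u v)
    rw [div_le_div_iff₀ (mul_pos hmipos hmjpos) (pow_pos hnk 2)]
    have h2 : (((n:ℝ)-k)/k) * (((n:ℝ)-k)/k) ≤ ((P i).card:ℝ) * ((P j).card:ℝ) :=
      mul_le_mul hmi hmj (le_of_lt (div_pos hnk hkR)) (le_of_lt hmipos)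
    have h3 : (((n:ℝ)-k)/k) * (((n:ℝ)-k)/k) = ((n:ℝ)-k)^2 / (k:ℝ)^2 := by ring
    rw [h3] at h2
    have := mul_le_mul_of_nonneg_right h2 (le_of_lt (pow_pos hkR 2))
    rw [div_mul_cancel₀ _ (ne_of_gt (pow_pos hkR 2))] at this
    linarith
  -- splitting sums over the partition
  have hsplit : ∀ g : V → ℝ, ∑ u : V, g u = ∑ i, ∑ u ∈ P i, g u := by
    intro g
    rw [show (Finset.univ : Finset V) = Finset.univ.biUnion P from hcover.symm,
      Finset.sum_biUnion hdisjP]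
  have hT : ∑ u : V, ∑ v : V, f u v = ∑ i, ∑ j, ∑ u ∈ P i, ∑ v ∈ P j, f u v := by
    rw [hsplit (fun u => ∑ v : V, f u v)]
    refine Finset.sum_congr rfl fun i _ => ?_
    rw [show (∑ u ∈ P i, ∑ v : V, f u v) = ∑ u ∈ P i, ∑ j, ∑ v ∈ P j, f u v from
      Finset.sum_congr rfl fun u _ => hsplit (f u), Finset.sum_comm]
  -- assemble
  have hstep : distWk (clusterW G₁ P) (clusterW G₂ P) ≤
      (∑ u : V, ∑ v : V, f u v) / ((n:ℝ)-k)^2 := by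
    rw [distWk, hT]
    rw [div_le_div_iff₀ (pow_pos hkR 2) (pow_pos hnk 2)]
    have hb : (∑ i : Fin k, ∑ j : Fin k, |clusterW G₁ P i j - clusterW G₂ P i j|) ≤
        ∑ i : Fin k, ∑ j : Fin k,
          (∑ u ∈ P i, ∑ v ∈ P j, f u v) * ((k:ℝ)^2 / ((n:ℝ)-k)^2) :=
      Finset.sum_le_sum fun i _ => Finset.sum_le_sum fun j _ => key i j
    have hc : ∑ i : Fin k, ∑ j : Fin k,
          (∑ u ∈ P i, ∑ v ∈ P j, f u v) * ((k:ℝ)^2 / ((n:ℝ)-k)^2)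
        = (∑ i : Fin k, ∑ j : Fin k, ∑ u ∈ P i, ∑ v ∈ P j, f u v)
            * ((k:ℝ)^2 / ((n:ℝ)-k)^2) := by
      rw [Finset.sum_mul]
      exact Finset.sum_congr rfl fun i _ => (Finset.sum_mul _ _ _).symm
    have := hb.trans_eq hc
    calc (∑ i : Fin k, ∑ j : Fin k, |clusterW G₁ P i j - clusterW G₂ P i j|) * ((n:ℝ)-k)^2
        ≤ ((∑ i : Fin k, ∑ j : Fin k, ∑ u ∈ P i, ∑ v ∈ P j, f u v)
            * ((k:ℝ)^2 / ((n:ℝ)-k)^2)) * ((n:ℝ)-k)^2 := by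
          exact mul_le_mul_of_nonneg_right this (le_of_lt (pow_pos hnk 2))
      _ = (∑ i : Fin k, ∑ j : Fin k, ∑ u ∈ P i, ∑ v ∈ P j, f u v) * (k:ℝ)^2 := by
          field_simp
  have hTnn : 0 ≤ ∑ u : V, ∑ v : V, f u v :=
    Finset.sum_nonneg fun u _ => Finset.sum_nonneg fun v _ => hf0 u v
  have hdist : distG G₁ G₂ = (∑ u : V, ∑ v : V, f u v) / ((n:ℝ))^2 := rfl
  have hdnn : 0 ≤ distG G₁ G₂ := by
    rw [hdist]; positivity
  have hfinal : (∑ u : V, ∑ v : V, f u v) / ((n:ℝ)-k)^2 ≤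
      (1 + 2 * (k : ℝ) / ((n : ℝ) - 2 * k)) * distG G₁ G₂ := by
    rw [hdist]
    have hrhs : (1 + 2 * (k : ℝ) / ((n : ℝ) - 2 * k)) = (n:ℝ) / ((n:ℝ) - 2*k) := by
      field_simp
      ring
    rw [hrhs, div_mul_div_comm, div_le_div_iff₀ (pow_pos hnk 2)
      (mul_pos hnk2 (pow_pos (lt_of_lt_of_le hkR (by linarith : (k:ℝ) ≤ n)) 2))]
    have hkey : (n:ℝ) * ((n:ℝ) - 2*k) ≤ ((n:ℝ) - k)^2 := by nlinarith [sq_nonneg (k:ℝ)]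
    have hn0 : (0:ℝ) ≤ (n:ℝ) := by positivity
    have hmul := mul_le_mul_of_nonneg_left hkey
      (mul_nonneg hTnn hn0)
    nlinarith [hmul]
  exact hstep.trans hfinal
end

section
/- Let 𝓕 be a family of graphs and R, R' weighted graphs on the same vertex set V. Define z*(R) = (1/|V|²)·max{e(S) : S ≤ R, t(F,S) = 0 for all F ∈ 𝓕}, where e(S) = (1/2)·∑_{(i,j)∈V×V} S(i,j). Then |z*(R) - z*(R')| ≤ (1/2)·dist(R,R'). -/
open Finset

attribute [local instance] Classical.propDecidable

/-- Homomorphism weight of a map `φ` from the vertices of `F` into a weighted graph `R`. -/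
noncomputable def homW {α V : Type*} [Fintype α] (F : SimpleGraph α)
    (R : V → V → ℝ) (φ : α → V) : ℝ :=
  ∏ e ∈ F.edgeFinset, R (φ (Quot.out e).1) (φ (Quot.out e).2)

/-- Homomorphism density of `F` in a weighted graph `R`. -/
noncomputable def tW {α V : Type*} [Fintype α] [Fintype V] (F : SimpleGraph α)
    (R : V → V → ℝ) : ℝ :=
  (∑ φ : α → V, homW F R φ) / ((Fintype.card V : ℝ) ^ (Fintype.card α))

/-- Total edge weight of a weighted graph. -/
noncomputable def eW {V : Type*} [Fintype V] (R : V → V → ℝ) : ℝ :=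
  (∑ i, ∑ j, R i j) / 2

/-- Normalized edit distance between two weighted graphs on the same vertex set. -/
noncomputable def distW {V : Type*} [Fintype V] (R R' : V → V → ℝ) : ℝ :=
  (∑ i, ∑ j, |R i j - R' i j|) / ((Fintype.card V : ℝ) ^ 2)

/-- `z*(R)`: the largest edge weight of a spanning subgraph of `R` that is
`𝓕`-free in the homomorphism sense, normalized by `|V|²`. -/
noncomputable def zstar {V ι : Type*} [Fintype V] (nF : ι → ℕ)
    (F : ∀ i, SimpleGraph (Fin (nF i))) (R : V → V → ℝ) : ℝ :=
  sSup {x : ℝ | ∃ S : V → V → ℝ, (∀ a b, S a b = S b a) ∧ (∀ a b, 0 ≤ S a b) ∧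
      (∀ a b, S a b ≤ R a b) ∧ (∀ i, tW (F i) S = 0) ∧ x = eW S} /
    ((Fintype.card V : ℝ) ^ 2)

lemma tW_zero_of_le {α V : Type*} [Fintype α] [Fintype V] (F : SimpleGraph α)
    (S S' : V → V → ℝ) (h0 : ∀ a b, 0 ≤ S' a b) (hle : ∀ a b, S' a b ≤ S a b)
    (hS : tW F S = 0) : tW F S' = 0 := by
  unfold tW at *
  by_cases hd : ((Fintype.card V : ℝ) ^ (Fintype.card α)) = 0
  · simp [hd]
  · rcases div_eq_zero_iff.mp hS with hsum | hd'
    · have h1 : ∑ φ : α → V, homW F S' φ ≤ 0 := by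
        rw [← hsum]
        refine Finset.sum_le_sum fun φ _ => ?_
        exact Finset.prod_le_prod (fun e _ => h0 _ _) (fun e _ => hle _ _)
      have h2 : 0 ≤ ∑ φ : α → V, homW F S' φ :=
        Finset.sum_nonneg fun φ _ => Finset.prod_nonneg fun e _ => h0 _ _
      rw [le_antisymm h1 h2, zero_div]
    · exact absurd hd' hd
lemma tW_zero_fun {α V : Type*} [Fintype α] [Fintype V] (F : SimpleGraph α)
    (h : ∃ a b, F.Adj a b) : tW F (fun _ _ : V => (0:ℝ)) = 0 := by
  obtain ⟨a, b, hab⟩ := h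
  have he : s(a, b) ∈ F.edgeFinset := by
    rw [SimpleGraph.mem_edgeFinset]; exact hab
  unfold tW homW
  rw [Finset.sum_eq_zero fun φ _ => Finset.prod_eq_zero he rfl, zero_div]

def Aset {V ι : Type*} [Fintype V] (nF : ι → ℕ)
    (F : ∀ i, SimpleGraph (Fin (nF i))) (R : V → V → ℝ) : Set ℝ :=
  {x : ℝ | ∃ S : V → V → ℝ, (∀ a b, S a b = S b a) ∧ (∀ a b, 0 ≤ S a b) ∧
      (∀ a b, S a b ≤ R a b) ∧ (∀ i, tW (F i) S = 0) ∧ x = eW S}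

lemma zero_mem_Aset {V ι : Type*} [Fintype V] (nF : ι → ℕ)
    (F : ∀ i, SimpleGraph (Fin (nF i))) (hedge : ∀ i, ∃ a b, (F i).Adj a b)
    (R : V → V → ℝ) (hR0 : ∀ a b, 0 ≤ R a b) : (0:ℝ) ∈ Aset nF F R :=
  ⟨fun _ _ => 0, fun _ _ => rfl, fun _ _ => le_refl 0, fun a b => hR0 a b,
    fun i => tW_zero_fun (F i) (hedge i), by simp [eW]⟩

lemma bddAbove_Aset {V ι : Type*} [Fintype V] (nF : ι → ℕ)
    (F : ∀ i, SimpleGraph (Fin (nF i))) (R : V → V → ℝ) :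
    BddAbove (Aset nF F R) := by
  refine ⟨eW R, ?_⟩
  rintro x ⟨S, _, _, hle, _, rfl⟩
  unfold eW
  gcongr with i _ j
  exact hle i j

lemma sSup_Aset_le {V ι : Type*} [Fintype V] (nF : ι → ℕ)
    (F : ∀ i, SimpleGraph (Fin (nF i))) (hedge : ∀ i, ∃ a b, (F i).Adj a b)
    (R R' : V → V → ℝ) (hR'0 : ∀ a b, 0 ≤ R' a b) (hR'sym : ∀ a b, R' a b = R' b a) :
    sSup (Aset nF F R) ≤ sSup (Aset nF F R') + (∑ i, ∑ j, |R i j - R' i j|) / 2 := by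
  have hD : 0 ≤ (∑ i, ∑ j, |R i j - R' i j|) / 2 := by positivity
  have h0' : (0:ℝ) ≤ sSup (Aset nF F R') :=
    le_csSup (bddAbove_Aset nF F R') (zero_mem_Aset nF F hedge R' hR'0)
  apply Real.sSup_le _ (by linarith)
  rintro x ⟨S, hsym, h0, hle, ht, rfl⟩
  set S' : V → V → ℝ := fun a b => min (S a b) (R' a b) with hS'
  have hmem : eW S' ∈ Aset nF F R' := by
    refine ⟨S', fun a b => by simp only [hS', hsym a b, hR'sym a b],
      fun a b => le_min (h0 a b) (hR'0 a b), fun a b => min_le_right _ _,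
      fun i => tW_zero_of_le (F i) S S' (fun a b => le_min (h0 a b) (hR'0 a b))
        (fun a b => min_le_left _ _) (ht i), rfl⟩
  have h1 : eW S ≤ eW S' + (∑ i, ∑ j, |R i j - R' i j|) / 2 := by
    unfold eW
    rw [← add_div]
    rw [← Finset.sum_add_distrib]
    gcongr with i _
    rw [← Finset.sum_add_distrib]
    refine Finset.sum_le_sum fun j _ => ?_
    rcases le_total (S i j) (R' i j) with h | h
    · simp only [hS', min_eq_left h]
      have := abs_nonneg (R i j - R' i j); linarith
    · simp only [hS', min_eq_right h]
      have h2 : R i j - R' i j ≤ |R i j - R' i j| := le_abs_self _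
      have := hle i j; linarith
  calc eW S ≤ eW S' + (∑ i, ∑ j, |R i j - R' i j|) / 2 := h1
    _ ≤ _ := by gcongr; exact le_csSup (bddAbove_Aset nF F R') hmem

/-- The parameter `z*` is Lipschitz with constant `1/2` with respect to the
normalized distance between weighted graphs. -/
theorem stmt6 {V ι : Type*} [Fintype V] (nF : ι → ℕ)
    (F : ∀ i, SimpleGraph (Fin (nF i)))
    (hedge : ∀ i, ∃ a b, (F i).Adj a b)
    (R R' : V → V → ℝ)
    (hRsym : ∀ a b, R a b = R b a) (hR0 : ∀ a b, 0 ≤ R a b) (hR1 : ∀ a b, R a b ≤ 1)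
    (hR'sym : ∀ a b, R' a b = R' b a) (hR'0 : ∀ a b, 0 ≤ R' a b) (hR'1 : ∀ a b, R' a b ≤ 1) :
    |zstar nF F R - zstar nF F R'| ≤ (1 / 2) * distW R R' := by
  have hz : ∀ T : V → V → ℝ, zstar nF F T = sSup (Aset nF F T) / ((Fintype.card V : ℝ) ^ 2) :=
    fun T => rfl
  set D : ℝ := (∑ i, ∑ j, |R i j - R' i j|) / 2 with hDdef
  have habs : |sSup (Aset nF F R) - sSup (Aset nF F R')| ≤ D := by
    rw [abs_sub_le_iff]
    constructor
    · have := sSup_Aset_le nF F hedge R R' hR'0 hR'sym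
      linarith
    · have := sSup_Aset_le nF F hedge R' R hR0 hRsym
      have heq : (∑ i, ∑ j, |R' i j - R i j|) = ∑ i, ∑ j, |R i j - R' i j| := by
        simp [abs_sub_comm]
      rw [heq] at this
      linarith
  by_cases hc : ((Fintype.card V : ℝ) ^ 2) = 0
  · simp [hz, distW, hc]
  · have hcpos : (0:ℝ) < (Fintype.card V : ℝ) ^ 2 :=
      lt_of_le_of_ne (by positivity) (Ne.symm hc)
    rw [hz, hz, div_sub_div_same, abs_div, abs_of_pos hcpos]
    have : (1 / 2) * distW R R' = D / ((Fintype.card V : ℝ) ^ 2) := by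
      rw [distW, hDdef]; ring
    rw [this]
    gcongr
end

section
/- Let r ≥ 1 and 0 < ε ≤ 1, and let G be an r-colorable graph on n vertices, where k = ⌈r/ε⌉ divides n and n is sufficiently large. Then there exists an equipartition 𝒱 of V(G) into k classes of size n/k each, and a weighted graph S on [k] with S ≤ G/𝒱, such that t(K_{r+1}, S) = 0 (indeed S is r-partite as a weighted graph: [k] can be partitioned into r classes with S vanishing within each class) and dist(G/𝒱, S) ≤ ε. -/
open Finset

attribute [local instance] Classical.propDecidable

lemma clusterW_nonneg {V : Type*} {k : ℕ} (G : SimpleGraph V)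
    (P : Fin k → Finset V) (i j : Fin k) : 0 ≤ clusterW G P i j := by
  unfold clusterW
  positivity

lemma clusterW_comm {V : Type*} {k : ℕ} (G : SimpleGraph V)
    (P : Fin k → Finset V) (i j : Fin k) : clusterW G P i j = clusterW G P j i := by
  unfold clusterW
  rw [mul_comm]
  congr 2
  apply Finset.card_bij' (fun p _ => (p.2, p.1)) (fun p _ => (p.2, p.1)) <;>
    simp +contextual [Finset.mem_filter, Finset.mem_product, and_assoc, SimpleGraph.adj_comm,
      and_comm]

lemma clusterW_le_one {V : Type*} {k : ℕ} (G : SimpleGraph V)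
    (P : Fin k → Finset V) (i j : Fin k) (hi : 0 < (P i).card) (hj : 0 < (P j).card) :
    clusterW G P i j ≤ 1 := by
  unfold clusterW
  rw [div_le_one (by positivity)]
  calc ((((P i) ×ˢ (P j)).filter fun p => G.Adj p.1 p.2).card : ℝ)
      ≤ (((P i) ×ˢ (P j)).card : ℝ) := by
        exact_mod_cast Finset.card_le_card (Finset.filter_subset _ _)
    _ = ((P i).card : ℝ) * ((P j).card : ℝ) := by
        rw [Finset.card_product]; push_cast; ring

/-- `r`-colorability is `f`-recoverable with `f(ε) = r/ε`: every `r`-colorable graph on a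
sufficiently large vertex set whose size is divisible by `k = ⌈r/ε⌉` admits an equipartition
into `k` classes of size `n/k`, together with an `r`-partite weighted subgraph `S` of the
cluster graph with `t(K_{r+1},S) = 0` and `dist(G/𝒱,S) ≤ ε`. -/
theorem stmt10 (r : ℕ) (hr : 1 ≤ r) (ε : ℝ) (hε0 : 0 < ε) (hε1 : ε ≤ 1)
    (k : ℕ) (hk : k = ⌈(r : ℝ) / ε⌉₊) :
    ∃ n₀ : ℕ, ∀ (V : Type) (_ : Fintype V) (_ : DecidableEq V) (G : SimpleGraph V),
      G.Colorable r → k ∣ Fintype.card V → n₀ ≤ Fintype.card V →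
      ∃ P : Fin k → Finset V,
        (∀ i j, i ≠ j → Disjoint (P i) (P j)) ∧
        (Finset.univ.biUnion P = Finset.univ) ∧
        (∀ i, (P i).card = Fintype.card V / k) ∧
        ∃ S : Fin k → Fin k → ℝ,
          (∀ i j, S i j = S j i) ∧ (∀ i j, 0 ≤ S i j) ∧
          (∀ i j, S i j ≤ clusterW G P i j) ∧
          (∃ c : Fin k → Fin r, ∀ i j, c i = c j → S i j = 0) ∧
          tW (⊤ : SimpleGraph (Fin (r + 1))) S = 0 ∧
          distWk (clusterW G P) S ≤ ε := by
  have hr0 : (0:ℝ) < r := by exact_mod_cast hr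
  have hk1 : 0 < k := by
    rw [hk]
    exact Nat.ceil_pos.mpr (div_pos hr0 hε0)
  have hrk : (r : ℝ) ≤ ε * k := by
    have h1 : (r : ℝ) / ε ≤ (k : ℝ) := by rw [hk]; exact Nat.le_ceil _
    rw [div_le_iff₀ hε0] at h1
    linarith
  refine ⟨k, ?_⟩
  intro V instF instD G hcol hdvd hn
  classical
  obtain ⟨m, hnm⟩ := hdvd
  have hm1 : 1 ≤ m := by
    rcases Nat.eq_zero_or_pos m with h | h
    · rw [h, mul_zero] at hnm; omega
    · exact h
  -- a proper coloring
  let C : G.Coloring (Fin r) := hcol.some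
  have hCvalid : ∀ {u v : V}, G.Adj u v → C u ≠ C v := fun h => C.valid h
  -- linear order on V sorting by color
  let f : V ≃ Fin (Fintype.card V) := Fintype.equivFin V
  let key : V → ℕ := fun v => (C v : ℕ) * Fintype.card V + (f v : ℕ)
  have hcard0 : 0 < Fintype.card V := lt_of_lt_of_le hk1 hn
  have keyinj : Function.Injective key := by
    have hmod : ∀ u : V, key u % Fintype.card V = (f u : ℕ) := by
      intro u
      show ((C u : ℕ) * Fintype.card V + (f u : ℕ)) % Fintype.card V = (f u : ℕ)
      rw [Nat.add_comm, Nat.add_mul_mod_self_right, Nat.mod_eq_of_lt (f u).isLt]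
    intro u v h
    apply f.injective
    apply Fin.ext
    rw [← hmod u, ← hmod v, h]
  letI : LinearOrder V := LinearOrder.lift' key keyinj
  have hle : ∀ u v : V, u ≤ v ↔ key u ≤ key v := fun _ _ => Iff.rfl
  let e : Fin (Fintype.card V) ≃o V := Fintype.orderIsoFinOfCardEq V rfl
  let pos : V → ℕ := fun v => (e.symm v : ℕ)
  have hposlt : ∀ v, pos v < k * m := by
    intro v
    have h1 := (e.symm v).isLt
    show (e.symm v : ℕ) < k * m
    omega
  have hposinj : Function.Injective pos := by
    intro u v h
    exact e.symm.injective (Fin.ext h)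
  have hCmono : ∀ u v : V, pos u ≤ pos v → (C u : ℕ) ≤ (C v : ℕ) := by
    intro u v h
    have h2 : u ≤ v := by
      have h3 : e.symm u ≤ e.symm v := Fin.mk_le_mk.mpr h
      exact e.symm.le_iff_le.mp h3
    have h3 : key u ≤ key v := (hle u v).1 h2
    by_contra hc
    push_neg at hc
    have h4 : ((C v : ℕ) + 1) * Fintype.card V ≤ (C u : ℕ) * Fintype.card V :=
      Nat.mul_le_mul_right _ hc
    have h5 := (f v).isLt
    simp only [key] at h3
    nlinarith [(f u).isLt]
  -- the partition
  let P : Fin k → Finset V := fun i => univ.filter (fun v => pos v / m = (i : ℕ))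
  have hmemP : ∀ (v : V) (i : Fin k), v ∈ P i ↔ pos v / m = (i : ℕ) := by
    intro v i; simp [P]
  have hdiv_iff : ∀ t i : ℕ, t / m = i ↔ i * m ≤ t ∧ t < i * m + m := by
    intro t i
    constructor
    · rintro rfl
      have h1 := Nat.div_add_mod t m
      have h2 := Nat.mod_lt t (by omega : 0 < m)
      constructor
      · rw [mul_comm]; omega
      · rw [mul_comm]; omega
    · rintro ⟨h1, h2⟩
      refine Nat.div_eq_of_lt_le h1 ?_
      have hx : (i + 1) * m = i * m + m := by ring
      omega
  have hdivlt : ∀ v : V, pos v / m < k := by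
    intro v
    rw [Nat.div_lt_iff_lt_mul (by omega : 0 < m)]
    exact hposlt v
  have hPdisj : ∀ i j, i ≠ j → Disjoint (P i) (P j) := by
    intro i j hij
    rw [Finset.disjoint_left]
    intro v hvi hvj
    exact hij (Fin.ext (((hmemP v i).1 hvi).symm.trans ((hmemP v j).1 hvj)))
  have hPcover : univ.biUnion P = (univ : Finset V) := by
    apply Finset.eq_univ_of_forall
    intro v
    exact Finset.mem_biUnion.mpr ⟨⟨pos v / m, hdivlt v⟩, mem_univ _, (hmemP _ _).2 rfl⟩
  have hPcard : ∀ i, (P i).card = m := by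
    intro i
    have : (P i).card = (Finset.Ico ((i : ℕ) * m) ((i : ℕ) * m + m)).card := by
      apply Finset.card_bij (fun v _ => pos v)
      · intro v hv
        rw [Finset.mem_Ico]
        exact (hdiv_iff _ _).1 ((hmemP v i).1 hv)
      · intro u hu v hv h
        exact hposinj h
      · intro t ht
        rw [Finset.mem_Ico] at ht
        have htlt : t < Fintype.card V := by
          rw [hnm]
          have h1 : ((i : ℕ) + 1) * m ≤ k * m := Nat.mul_le_mul_right _ i.isLt
          have h2 : ((i : ℕ) + 1) * m = (i : ℕ) * m + m := by ring
          omega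
        refine ⟨e ⟨t, htlt⟩, ?_, ?_⟩
        · rw [hmemP]
          have : pos (e ⟨t, htlt⟩) = t := by simp [pos]
          rw [this]
          exact (hdiv_iff _ _).2 ⟨ht.1, ht.2⟩
        · simp [pos]
    rw [this, Nat.card_Ico]
    omega
  have hcardk : Fintype.card V / k = m := by rw [hnm]; exact Nat.mul_div_cancel_left m hk1
  -- the partite map
  have hlast : ∀ i : Fin k, (i : ℕ) * m + (m - 1) < Fintype.card V := by
    intro i
    rw [hnm]
    have h1 : ((i : ℕ) + 1) * m ≤ k * m := Nat.mul_le_mul_right _ i.isLt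
    have h2 : ((i : ℕ) + 1) * m = (i : ℕ) * m + m := by ring
    omega
  let lastV : Fin k → V := fun i => e ⟨(i : ℕ) * m + (m - 1), hlast i⟩
  let c : Fin k → Fin r := fun i => C (lastV i)
  have hposlast : ∀ i, pos (lastV i) = (i : ℕ) * m + (m - 1) := by
    intro i; simp [pos, lastV]
  -- purity
  have hpure : ∀ i j : Fin k, (i : ℕ) < (j : ℕ) → c i = c j → ∀ v ∈ P j, C v = c j := by
    intro i j hij hcc v hv
    obtain ⟨h1, h2⟩ := (hdiv_iff _ _).1 ((hmemP v j).1 hv)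
    have hA : pos (lastV i) ≤ pos v := by
      rw [hposlast]
      have hx : ((i : ℕ) + 1) * m ≤ (j : ℕ) * m := Nat.mul_le_mul_right _ hij
      have hy : ((i : ℕ) + 1) * m = (i : ℕ) * m + m := by ring
      omega
    have hB : pos v ≤ pos (lastV j) := by
      rw [hposlast]; omega
    have hab := hCmono _ _ hA
    have hba := hCmono _ _ hB
    have hcc' : (C (lastV i) : ℕ) = (C (lastV j) : ℕ) := by
      simpa [c] using congrArg (fun x : Fin r => (x : ℕ)) hcc
    apply Fin.ext
    simp only [c]
    omega
  -- no edges between pure classes of the same color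
  have hnoedge : ∀ i j : Fin k, (∀ v ∈ P i, C v = c i) → (∀ v ∈ P j, C v = c j) →
      c i = c j → clusterW G P i j = 0 := by
    intro i j hi hj hcc
    have hempty : ((P i ×ˢ P j).filter fun p => G.Adj p.1 p.2) = ∅ := by
      rw [Finset.filter_eq_empty_iff]
      intro p hp
      rw [Finset.mem_product] at hp
      intro hadj
      exact hCvalid hadj (by rw [hi _ hp.1, hj _ hp.2, hcc])
    unfold clusterW
    rw [hempty]
    simp
  -- the weighted graph S
  let W : Fin k → Fin k → ℝ := clusterW G P
  let S : Fin k → Fin k → ℝ := fun i j => if c i = c j then 0 else W i j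
  have hWnonneg : ∀ i j, 0 ≤ W i j := fun i j => clusterW_nonneg G P i j
  have hWle1 : ∀ i j, W i j ≤ 1 := fun i j =>
    clusterW_le_one G P i j (by rw [hPcard]; omega) (by rw [hPcard]; omega)
  -- the min lemma
  have hmin : ∀ p : Fin k × Fin k, c p.1 = c p.2 → W p.1 p.2 ≠ 0 →
      ∀ i', c i' = c p.1 → min p.1 p.2 ≤ i' := by
    intro p hcc hW i' hci'
    by_contra h
    push_neg at h
    rw [lt_min_iff] at h
    obtain ⟨h1, h2⟩ := h
    apply hW
    apply hnoedge
    · exact hpure i' p.1 (Fin.lt_def.mp h1) hci'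
    · exact hpure i' p.2 (Fin.lt_def.mp h2) (hci'.trans hcc)
    · exact hcc
  have hcmin : ∀ a b : Fin k, c a = c b → c (min a b) = c a := by
    intro a b h
    rcases le_total a b with hab | hab
    · rw [min_eq_left hab]
    · rw [min_eq_right hab, h]
  have hcmax : ∀ a b : Fin k, c a = c b → c (max a b) = c a := by
    intro a b h
    rcases le_total a b with hab | hab
    · rw [max_eq_right hab, h]
    · rw [max_eq_left hab]
  -- the bad set
  let F : Finset (Fin k × Fin k) := univ.filter (fun p => c p.1 = c p.2 ∧ W p.1 p.2 ≠ 0)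
  have hFcard : F.card ≤ k * 2 := by
    have h1 : F.card ≤ (univ : Finset (Fin k × Bool)).card := by
      apply Finset.card_le_card_of_injOn (fun p => (max p.1 p.2, decide (p.1 ≤ p.2)))
      · intro p hp; exact mem_univ _
      · intro p hp q hq heq
        simp only [Finset.coe_filter, Set.mem_setOf_eq, mem_univ, true_and, F] at hp hq
        obtain ⟨hp1, hp2⟩ := hp
        obtain ⟨hq1, hq2⟩ := hq
        have hmaxeq : max p.1 p.2 = max q.1 q.2 := congrArg Prod.fst heq
        have hbooleq : decide (p.1 ≤ p.2) = decide (q.1 ≤ q.2) := congrArg Prod.snd heq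
        have hbool : (p.1 ≤ p.2) ↔ (q.1 ≤ q.2) := by
          constructor <;> intro h
          · exact of_decide_eq_true (hbooleq ▸ decide_eq_true h)
          · exact of_decide_eq_true (hbooleq.symm ▸ decide_eq_true h)
        have hcpq : c q.1 = c p.1 := by
          have e1 : c (max p.1 p.2) = c p.1 := hcmax _ _ hp1
          have e2 : c (max q.1 q.2) = c q.1 := hcmax _ _ hq1
          rw [← e2, ← hmaxeq, e1]
        have hminpq : min p.1 p.2 = min q.1 q.2 := by
          apply le_antisymm
          · exact hmin p hp1 hp2 _ ((hcmin _ _ hq1).trans hcpq)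
          · exact hmin q hq1 hq2 _ ((hcmin _ _ hp1).trans hcpq.symm)
        rcases le_or_gt p.1 p.2 with h | h
        · have h' : q.1 ≤ q.2 := hbool.mp h
          have : p.1 = q.1 := by
            rw [← min_eq_left h, ← min_eq_left h', hminpq]
          have : p.2 = q.2 := by
            rw [← max_eq_right h, ← max_eq_right h', hmaxeq]
          exact Prod.ext ‹p.1 = q.1› ‹p.2 = q.2›
        · have h' : ¬ (q.1 ≤ q.2) := fun hh => absurd (hbool.mpr hh) (not_le.mpr h)
          rw [not_le] at h'
          have : p.1 = q.1 := by
            rw [← max_eq_left h.le, ← max_eq_left h'.le, hmaxeq]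
          have : p.2 = q.2 := by
            rw [← min_eq_right h.le, ← min_eq_right h'.le, hminpq]
          exact Prod.ext ‹p.1 = q.1› ‹p.2 = q.2›
    simpa using h1
  -- the sum bound
  have habs : ∀ i j, |W i j - S i j| = if c i = c j then W i j else 0 := by
    intro i j
    by_cases h : c i = c j
    · simp [S, h, abs_of_nonneg (hWnonneg i j)]
    · simp [S, h]
  have hT : (∑ i : Fin k, ∑ j : Fin k, |W i j - S i j|) ≤ (k : ℝ) * 2 := by
    calc (∑ i : Fin k, ∑ j : Fin k, |W i j - S i j|)
        = ∑ p ∈ (univ ×ˢ univ : Finset (Fin k × Fin k)),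
            (if c p.1 = c p.2 then W p.1 p.2 else 0) := by
          rw [Finset.sum_product]
          exact Finset.sum_congr rfl fun i _ => Finset.sum_congr rfl fun j _ => habs i j
      _ ≤ ∑ p ∈ (univ ×ˢ univ : Finset (Fin k × Fin k)),
            (if p ∈ F then (1:ℝ) else 0) := by
          apply Finset.sum_le_sum
          intro p hp
          by_cases h1 : c p.1 = c p.2
          · by_cases h2 : W p.1 p.2 = 0
            · rw [if_pos h1, h2]
              split <;> norm_num
            · have hpF : p ∈ F := by
                simp only [Finset.mem_filter, F]
                exact ⟨mem_univ _, h1, h2⟩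
              rw [if_pos h1, if_pos hpF]
              exact hWle1 _ _
          · rw [if_neg h1]
            split <;> norm_num
      _ = (F.card : ℝ) := by
          rw [Finset.sum_ite_mem]
          have : (univ ×ˢ univ : Finset (Fin k × Fin k)) ∩ F = F := by
            rw [Finset.univ_product_univ, Finset.univ_inter]
          rw [this, Finset.sum_const, nsmul_eq_mul, mul_one]
      _ ≤ (k : ℝ) * 2 := by exact_mod_cast hFcard
  -- assemble
  refine ⟨P, hPdisj, hPcover, fun i => by rw [hPcard, hcardk], S, ?_, ?_, ?_, ⟨c, ?_⟩, ?_, ?_⟩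
  · -- symmetry
    intro i j
    by_cases h : c i = c j
    · show (if c i = c j then (0:ℝ) else W i j) = (if c j = c i then (0:ℝ) else W j i)
      rw [if_pos h, if_pos h.symm]
    · have h' : ¬ c j = c i := fun hh => h hh.symm
      show (if c i = c j then (0:ℝ) else W i j) = (if c j = c i then (0:ℝ) else W j i)
      rw [if_neg h, if_neg h']
      exact clusterW_comm G P i j
  · -- nonneg
    intro i j
    by_cases h : c i = c j <;> simp [S, h, hWnonneg i j]
  · -- S ≤ clusterW
    intro i j
    by_cases h : c i = c j <;> simp [S, W, h, clusterW_nonneg]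
  · -- r-partite
    intro i j h
    simp [S, h]
  · -- tW = 0
    have hhom : ∀ φ : Fin (r + 1) → Fin k, homW (⊤ : SimpleGraph (Fin (r + 1))) S φ = 0 := by
      intro φ
      obtain ⟨a, b, hab, hcab⟩ :=
        Fintype.exists_ne_map_eq_of_card_lt (fun x : Fin (r + 1) => c (φ x)) (by simp)
      apply Finset.prod_eq_zero (i := s(a, b))
      · simp [SimpleGraph.mem_edgeFinset, hab]
      · have hout : (Quot.out (s(a, b) : Sym2 (Fin (r + 1)))) = (a, b) ∨
            (Quot.out (s(a, b) : Sym2 (Fin (r + 1)))) = (b, a) := by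
          have h2 : s((Quot.out (s(a, b) : Sym2 (Fin (r + 1)))).1,
              (Quot.out (s(a, b) : Sym2 (Fin (r + 1)))).2) = s(a, b) :=
            Quot.out_eq _
          rw [Sym2.eq_iff] at h2
          rcases h2 with ⟨h3, h4⟩ | ⟨h3, h4⟩
          · left; exact Prod.ext h3 h4
          · right; exact Prod.ext h3 h4
        rcases hout with h | h
        · rw [h]
          show (if c (φ a) = c (φ b) then (0:ℝ) else W (φ a) (φ b)) = 0
          rw [if_pos hcab]
        · rw [h]
          show (if c (φ b) = c (φ a) then (0:ℝ) else W (φ b) (φ a)) = 0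
          rw [if_pos hcab.symm]
    unfold tW
    rw [Finset.sum_congr rfl (fun φ _ => hhom φ), Finset.sum_const_zero, zero_div]
  · -- distance
    unfold distWk
    rw [div_le_iff₀ (by positivity)]
    rcases Nat.lt_or_ge r 2 with h2 | h2
    · -- r = 1 : G has no edges at all, so the whole sum is 0
      have hr1 : r = 1 := by omega
      have hW0 : ∀ i j, clusterW G P i j = 0 := by
        intro i j
        have hempty : ((P i ×ˢ P j).filter fun p => G.Adj p.1 p.2) = ∅ := by
          rw [Finset.filter_eq_empty_iff]
          intro p hp hadj
          apply hCvalid hadj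
          have : Subsingleton (Fin r) := by rw [hr1]; infer_instance
          exact Subsingleton.elim _ _
        unfold clusterW
        rw [hempty]
        simp
      have hzero : (∑ i : Fin k, ∑ j : Fin k, |clusterW G P i j - S i j|) = 0 := by
        apply Finset.sum_eq_zero
        intro i _
        apply Finset.sum_eq_zero
        intro j _
        have hS0 : S i j = 0 := by
          by_cases h : c i = c j <;> simp [S, W, h, hW0 i j]
        rw [hS0, hW0 i j]
        simp
      rw [hzero]
      positivity
    · calc (∑ i : Fin k, ∑ j : Fin k, |clusterW G P i j - S i j|)
          ≤ (k : ℝ) * 2 := hT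
        _ ≤ ε * (k : ℝ) ^ 2 := by
            have h2' : (2 : ℝ) ≤ r := by exact_mod_cast h2
            have hk' : (0 : ℝ) < k := by exact_mod_cast hk1
            nlinarith
end

section
/- Let Γ be a graph on vertex set V with |V| = n, let 𝓕 be a family of graphs, let 𝒱 = {V_1,...,V_k} be an equipartition of V with k ≤ εn, and let R = Γ/𝒱 be the cluster graph. Suppose S is a weighted graph on [k] with S ≤ R, t(F,S) = 0 for all F ∈ 𝓕, and e(S) = k²·ex(R,𝓕) (i.e., S maximizes edge weight). Let G be the spanning subgraph of Γ obtained by deleting all edges between V_i and V_j whenever S(i,j) = 0. Then G is 𝓕-free and e(G) ≥ (ex(R,𝓕) - ε)·n². -/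
open Finset

attribute [local instance] Classical.propDecidable

/-- `G` contains a (subgraph) copy of `F`. -/
def HasCopy {α V : Type*} (F : SimpleGraph α) (G : SimpleGraph V) : Prop :=
  ∃ f : α ↪ V, ∀ u w, F.Adj u w → G.Adj (f u) (f w)

lemma adj_out {α : Type*} (G : SimpleGraph α) (e : Sym2 α) (he : e ∈ G.edgeSet) :
    G.Adj (Quot.out e).1 (Quot.out e).2 := by
  rw [← SimpleGraph.mem_edgeSet]
  convert he using 2
  show Quot.mk _ _ = e
  rw [Prod.mk.eta]
  exact Quot.out_eq e

/-- Deleting from `Γ` the edges between classes on which an optimal `𝓕`-free weighted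
subgraph `S` of the cluster graph vanishes yields an `𝓕`-free spanning subgraph `G` of `Γ`
with `e(G) ≥ (ex(R,𝓕) - ε)·n²`, provided `k ≤ ε·n`. -/
theorem stmt11 {V : Type*} [Fintype V] [DecidableEq V] (Γ : SimpleGraph V)
    (n : ℕ) (hn : n = Fintype.card V) (ε : ℝ) (hε : 0 < ε)
    {ι : Type*} (nF : ι → ℕ) (F : ∀ i, SimpleGraph (Fin (nF i)))
    {k : ℕ} (hk : 0 < k) (hkn : (k : ℝ) ≤ ε * n)
    (P : Fin k → Finset V)
    (hdisj : ∀ i j, i ≠ j → Disjoint (P i) (P j))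
    (hcover : Finset.univ.biUnion P = Finset.univ)
    (hsize : ∀ i j, (P i).card ≤ (P j).card + 1)
    (S : Fin k → Fin k → ℝ)
    (hSsym : ∀ i j, S i j = S j i) (hS0 : ∀ i j, 0 ≤ S i j)
    (hSle : ∀ i j, S i j ≤ clusterW Γ P i j)
    (hSfree : ∀ i, tW (F i) S = 0)
    (hSmax : ∀ S' : Fin k → Fin k → ℝ, (∀ i j, S' i j = S' j i) → (∀ i j, 0 ≤ S' i j) →
      (∀ i j, S' i j ≤ clusterW Γ P i j) → (∀ i, tW (F i) S' = 0) → eW S' ≤ eW S)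
    (G : SimpleGraph V)
    (hG : ∀ u v, G.Adj u v ↔ (Γ.Adj u v ∧ ∀ i j, u ∈ P i → v ∈ P j → S i j ≠ 0)) :
    (∀ i, ¬ HasCopy (F i) G) ∧
    ((G.edgeFinset.card : ℝ) ≥ (eW S / (k : ℝ) ^ 2 - ε) * (n : ℝ) ^ 2) := by
  classical
  have uniq : ∀ (v : V) (i j : Fin k), v ∈ P i → v ∈ P j → i = j := by
    intro v i j hi hj
    by_contra h
    exact Finset.disjoint_left.mp (hdisj i j h) hi hj
  have exists_class : ∀ v : V, ∃ i, v ∈ P i := by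
    intro v
    have : v ∈ Finset.univ.biUnion P := by rw [hcover]; exact Finset.mem_univ v
    simpa using this
  constructor
  · -- 𝓕-freeness
    rintro i0 ⟨f, hf⟩
    choose c hc using fun u => exists_class (f u)
    have hpos : 0 < homW (F i0) S c := by
      apply Finset.prod_pos
      intro e he
      have hadj : (F i0).Adj (Quot.out e).1 (Quot.out e).2 :=
        adj_out _ _ (SimpleGraph.mem_edgeFinset.mp he)
      have hG' := hf _ _ hadj
      have hne := ((hG _ _).mp hG').2 _ _ (hc _) (hc _)
      exact lt_of_le_of_ne (hS0 _ _) (Ne.symm hne)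
    have htpos : 0 < tW (F i0) S := by
      rw [tW]
      apply div_pos
      · refine lt_of_lt_of_le hpos (Finset.single_le_sum
          (f := fun φ => homW (F i0) S φ)
          (fun φ _ => Finset.prod_nonneg fun e _ => hS0 _ _) (by simp))
      · apply pow_pos
        simpa using hk
    rw [hSfree i0] at htpos
    exact lt_irrefl _ htpos
  · -- edge count
    set N : Fin k → ℝ := fun i => ((P i).card : ℝ) with hN
    have hN0 : ∀ i, 0 ≤ N i := fun i => Nat.cast_nonneg _
    have hK : (0:ℝ) < (k:ℝ) := by exact_mod_cast hk
    have hnn : (0:ℝ) ≤ (n:ℝ) := Nat.cast_nonneg _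
    -- total size
    have hsum_card : ∑ i, (P i).card = n := by
      rw [hn, ← Finset.card_univ, ← hcover]
      exact (Finset.card_biUnion (fun i _ j _ h => hdisj i j h)).symm
    -- lower bound on class sizes
    have hsizelb : ∀ i, (n:ℝ)/(k:ℝ) - 1 ≤ N i := by
      intro i
      have h1 : (n:ℝ) ≤ (k:ℝ) * (N i + 1) := by
        have : ∑ j, (P j).card ≤ ∑ _j : Fin k, ((P i).card + 1) :=
          Finset.sum_le_sum fun j _ => hsize j i
        rw [hsum_card] at this
        simp only [Finset.sum_const, Finset.card_univ, Fintype.card_fin, smul_eq_mul] at this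
        have := (Nat.cast_le (α := ℝ)).mpr this
        push_cast at this
        rw [hN]; linarith
      rw [div_sub_one hK.ne', div_le_iff₀ hK]
      linarith [mul_comm (N i + 1) (k:ℝ)]
    -- clusterW ≤ 1
    have hW1 : ∀ i j, clusterW Γ P i j ≤ 1 := by
      intro i j
      apply div_le_one_of_le₀
      · have h := Finset.card_filter_le ((P i) ×ˢ (P j)) (fun p => Γ.Adj p.1 p.2)
        have := (Nat.cast_le (α := ℝ)).mpr h
        rwa [Finset.card_product, Nat.cast_mul] at this
      · positivity
    -- count of adjacent ordered pairs by classes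
    have hcountN : 2 * G.edgeFinset.card =
        ∑ i, ∑ j, (((P i) ×ˢ (P j)).filter fun p => G.Adj p.1 p.2).card := by
      have h1 : 2 * G.edgeFinset.card =
          ((Finset.univ : Finset (V × V)).filter fun p => G.Adj p.1 p.2).card := by
        rw [SimpleGraph.two_mul_card_edgeFinset]
      have h2 : ((Finset.univ : Finset (V × V)).filter fun p => G.Adj p.1 p.2).card
          = ∑ u : V, ∑ v : V, if G.Adj u v then 1 else 0 := by
        rw [Finset.card_filter]
        rw [← Finset.univ_product_univ, Finset.sum_product]
      have h3 : ∀ (g : V → ℕ), ∑ u : V, g u = ∑ i, ∑ u ∈ P i, g u := by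
        intro g
        rw [← hcover, Finset.sum_biUnion (fun i _ j _ h => hdisj i j h)]
      have h4 : ∀ i j, ∑ u ∈ P i, ∑ v ∈ P j, (if G.Adj u v then 1 else 0)
          = (((P i) ×ˢ (P j)).filter fun p => G.Adj p.1 p.2).card := by
        intro i j
        rw [Finset.card_filter, Finset.sum_product]
      rw [h1, h2, h3 (fun u => ∑ v : V, if G.Adj u v then 1 else 0)]
      refine Finset.sum_congr rfl fun i _ => ?_
      calc ∑ u ∈ P i, ∑ v : V, (if G.Adj u v then 1 else 0)
          = ∑ u ∈ P i, ∑ j, ∑ v ∈ P j, (if G.Adj u v then 1 else 0) :=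
            Finset.sum_congr rfl fun u _ =>
              h3 (fun v => if G.Adj u v then 1 else 0)
        _ = ∑ j, ∑ u ∈ P i, ∑ v ∈ P j, (if G.Adj u v then 1 else 0) := Finset.sum_comm
        _ = ∑ j, (((P i) ×ˢ (P j)).filter fun p => G.Adj p.1 p.2).card :=
            Finset.sum_congr rfl fun j _ => h4 i j
    have hcount : (2 * G.edgeFinset.card : ℝ) =
        ∑ i, ∑ j, ((((P i) ×ˢ (P j)).filter fun p => G.Adj p.1 p.2).card : ℝ) := by
      exact_mod_cast hcountN
    -- per-pair lower bound
    have hpair : ∀ i j, S i j * (N i * N j)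
        ≤ ((((P i) ×ˢ (P j)).filter fun p => G.Adj p.1 p.2).card : ℝ) := by
      intro i j
      by_cases hS : S i j = 0
      · rw [hS, zero_mul]; positivity
      · have hfe : (((P i) ×ˢ (P j)).filter fun p => G.Adj p.1 p.2)
            = (((P i) ×ˢ (P j)).filter fun p => Γ.Adj p.1 p.2) := by
          ext p
          simp only [Finset.mem_filter, Finset.mem_product]
          constructor
          · rintro ⟨hm, hadj⟩
            exact ⟨hm, ((hG _ _).mp hadj).1⟩
          · rintro ⟨hm, hadj⟩
            refine ⟨hm, (hG _ _).mpr ⟨hadj, ?_⟩⟩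
            intro i' j' hi' hj'
            rwa [← uniq p.1 i i' hm.1 hi', ← uniq p.2 j j' hm.2 hj']
        rw [hfe]
        by_cases hz : N i * N j = 0
        · have hz' : ((P i).card : ℝ) * ((P j).card : ℝ) = 0 := hz
          have hcard : ((P i) ×ˢ (P j)).card = 0 := by
            rw [Finset.card_product]
            exact_mod_cast hz'
          have hsub : (((P i) ×ˢ (P j)).filter fun p => Γ.Adj p.1 p.2).card = 0 :=
            Nat.le_zero.mp (hcard ▸ Finset.card_filter_le _ _)
          rw [hsub, hz, mul_zero]
          simp
        · have h := mul_le_mul_of_nonneg_right (hSle i j) (mul_nonneg (hN0 i) (hN0 j))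
          rwa [clusterW, div_mul_cancel₀] at h
          exact hz
    -- combine
    set B : ℝ := (n:ℝ)^2/(k:ℝ)^2 - 2*(n:ℝ)/(k:ℝ) with hB
    have hNB : ∀ i j, B ≤ N i * N j := by
      intro i j
      set q : ℝ := (n:ℝ)/(k:ℝ) with hq
      have hq0 : 0 ≤ q := div_nonneg hnn hK.le
      have hBq : B = q^2 - 2*q := by rw [hB, hq]; ring
      rcases le_or_gt 1 q with h1 | h1
      · have := mul_le_mul (hsizelb i) (hsizelb j) (by linarith) (hN0 i)
        rw [hBq]; nlinarith
      · rw [hBq]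
        nlinarith [mul_nonneg (hN0 i) (hN0 j)]
    have hSsum0 : (0:ℝ) ≤ ∑ i, ∑ j, S i j :=
      Finset.sum_nonneg fun i _ => Finset.sum_nonneg fun j _ => hS0 i j
    have hmain : B * (∑ i, ∑ j, S i j) ≤ (2 * G.edgeFinset.card : ℝ) := by
      rw [hcount, Finset.mul_sum]
      refine Finset.sum_le_sum fun i _ => ?_
      rw [Finset.mul_sum]
      refine Finset.sum_le_sum fun j _ => ?_
      calc B * S i j ≤ (N i * N j) * S i j :=
            mul_le_mul_of_nonneg_right (hNB i j) (hS0 i j)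
        _ = S i j * (N i * N j) := by ring
        _ ≤ _ := hpair i j
    have hSk2 : ∑ i, ∑ j, S i j ≤ (k:ℝ)^2 := by
      calc ∑ i, ∑ j, S i j ≤ ∑ _i : Fin k, ∑ _j : Fin k, (1:ℝ) :=
            Finset.sum_le_sum fun i _ => Finset.sum_le_sum fun j _ =>
              le_trans (hSle i j) (hW1 i j)
        _ = (k:ℝ)^2 := by simp [sq]
      
    have heW : ∑ i, ∑ j, S i j = 2 * eW S := by rw [eW]; ring
    have hE0 : 0 ≤ eW S := by rw [eW]; positivity
    have hE2 : 2 * eW S ≤ (k:ℝ)^2 := heW ▸ hSk2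
    -- final arithmetic
    have hstep : 2 * eW S * ((n:ℝ)/(k:ℝ)) ≤ ε * (n:ℝ)^2 := by
      have h1 : 2 * eW S * ((n:ℝ)/(k:ℝ)) ≤ (k:ℝ)^2 * ((n:ℝ)/(k:ℝ)) :=
        mul_le_mul_of_nonneg_right hE2 (div_nonneg hnn hK.le)
      have h2 : (k:ℝ)^2 * ((n:ℝ)/(k:ℝ)) = (k:ℝ) * (n:ℝ) := by
        field_simp
      have h3 : (k:ℝ) * (n:ℝ) ≤ (ε * n) * n := mul_le_mul_of_nonneg_right hkn hnn
      nlinarith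
    have hmain' : eW S * B ≤ (G.edgeFinset.card : ℝ) := by
      have := hmain
      rw [heW] at this
      linarith
    have hexp : eW S * B = eW S * (n:ℝ)^2 / (k:ℝ)^2 - eW S * (2*(n:ℝ)/(k:ℝ)) := by
      rw [hB]; ring
    have hgoal : (eW S / (k:ℝ)^2 - ε) * (n:ℝ)^2
        = eW S * (n:ℝ)^2 / (k:ℝ)^2 - ε * (n:ℝ)^2 := by ring
    rw [ge_iff_le, hgoal]
    have : eW S * (2*(n:ℝ)/(k:ℝ)) = 2 * eW S * ((n:ℝ)/(k:ℝ)) := by ring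
    rw [hexp, this] at hmain'
    linarith
end

section
/- Let Γ be a graph on n vertices and 𝓕 a family of graphs each having at least one edge. Then log₂|Forb(Γ,𝓕)| ≥ max over equipartitions 𝒱 of V(Γ) into k ≤ K classes of (ex(Γ/𝒱, 𝓕)·n² - k·n), provided n > K. -/
open Finset

attribute [local instance] Classical.propDecidable

lemma homW_eq_zero {α W : Type*} [Fintype α] [Fintype W] (F : SimpleGraph α)
    (R : W → W → ℝ) (hR : ∀ i j, 0 ≤ R i j) (hW : 0 < Fintype.card W)
    (h : tW F R = 0) (φ : α → W) : homW F R φ = 0 := by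
  unfold tW at h
  have hc : (0:ℝ) < (Fintype.card W : ℝ) := by exact_mod_cast hW
  have hden : ((Fintype.card W : ℝ) ^ (Fintype.card α)) ≠ 0 := by positivity
  have hsum0 := (div_eq_zero_iff.mp h).resolve_right hden
  exact (Finset.sum_eq_zero_iff_of_nonneg
    (fun ψ _ => Finset.prod_nonneg fun e _ => hR _ _)).mp hsum0 φ (Finset.mem_univ _)

set_option maxHeartbeats 4000000 in
/-- Counting `𝓕`-free spanning subgraphs from below: for every equipartition `𝒱` of `V(Γ)`
into `k ≤ K` classes (with `n > K`), `log₂|Forb(Γ,𝓕)| ≥ ex(Γ/𝒱,𝓕)·n² - k·n`. -/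
theorem stmt13 {V : Type*} [Fintype V] [DecidableEq V] (Γ : SimpleGraph V)
    (n K : ℕ) (hn : n = Fintype.card V) (hK : K < n)
    {ι : Type*} (nF : ι → ℕ) (F : ∀ i, SimpleGraph (Fin (nF i)))
    (hedge : ∀ i, ∃ a b, (F i).Adj a b)
    {k : ℕ} (hk : 0 < k) (hkK : k ≤ K)
    (P : Fin k → Finset V)
    (hdisj : ∀ i j, i ≠ j → Disjoint (P i) (P j))
    (hcover : Finset.univ.biUnion P = Finset.univ)
    (hsize : ∀ i j, (P i).card ≤ (P j).card + 1) :
    Real.logb 2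
        ((Set.ncard {G : SimpleGraph V | G ≤ Γ ∧ ∀ i, ¬ HasCopy (F i) G} : ℝ)) ≥
      (sSup {x : ℝ | ∃ S : Fin k → Fin k → ℝ, (∀ i j, S i j = S j i) ∧
            (∀ i j, 0 ≤ S i j) ∧ (∀ i j, S i j ≤ clusterW Γ P i j) ∧
            (∀ i, tW (F i) S = 0) ∧ x = eW S} / (k : ℝ) ^ 2) * (n : ℝ) ^ 2 -
        (k : ℝ) * (n : ℝ) := by
  classical
  have hk0 : (0:ℝ) < k := by exact_mod_cast hk
  have hnk : (k:ℝ) < n := by exact_mod_cast lt_of_le_of_lt hkK hK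
  have hn0 : (0:ℝ) < n := lt_trans hk0 hnk
  have hVpos : 0 < Fintype.card V := by omega
  -- the class map
  have hmem : ∀ v : V, ∃ i, v ∈ P i := by
    intro v
    have hv : v ∈ Finset.univ.biUnion P := by rw [hcover]; exact mem_univ v
    simpa using hv
  set cl : V → Fin k := fun v => (hmem v).choose with hcl_def
  have hcl : ∀ v, v ∈ P (cl v) := fun v => (hmem v).choose_spec
  have hclU : ∀ v i, v ∈ P i → cl v = i := by
    intro v i hv
    by_contra hne
    exact Finset.disjoint_left.mp (hdisj _ _ hne) (hcl v) hv
  have hiff : ∀ v i, cl v = i ↔ v ∈ P i := fun v i => ⟨fun h => h ▸ hcl v, hclU v i⟩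
  -- class sizes
  have hsum : ∑ j, (P j).card = n := by
    have h1 : (Finset.univ.biUnion P).card = ∑ j, (P j).card :=
      Finset.card_biUnion (fun i _ j _ h => hdisj i j h)
    rw [hcover, Finset.card_univ] at h1
    omega
  have hPc : ∀ i, ((n:ℝ) - k)/k ≤ ((P i).card : ℝ) := by
    intro i
    rw [div_le_iff₀ hk0]
    have h1 : n ≤ k * ((P i).card + 1) := by
      calc n = ∑ j, (P j).card := hsum.symm
        _ ≤ ∑ _j : Fin k, ((P i).card + 1) := Finset.sum_le_sum fun j _ => hsize j i
        _ = k * ((P i).card + 1) := by simp [Finset.sum_const, Finset.card_univ, mul_comm]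
    have h2 : (n:ℝ) ≤ k * ((P i).card + 1) := by exact_mod_cast h1
    nlinarith
  have hcpos : (0:ℝ) < ((n:ℝ) - k)/k := div_pos (by linarith) hk0
  have hPpos : ∀ i, (0:ℝ) < ((P i).card : ℝ) := fun i => lt_of_lt_of_le hcpos (hPc i)
  have hclW1 : ∀ i j, clusterW Γ P i j ≤ 1 := by
    intro i j
    unfold clusterW
    rw [div_le_one (mul_pos (hPpos i) (hPpos j))]
    calc ((((P i) ×ˢ (P j)).filter fun p => Γ.Adj p.1 p.2).card : ℝ)
        ≤ (((P i) ×ˢ (P j)).card : ℝ) := by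
          exact_mod_cast Finset.card_le_card (Finset.filter_subset _ _)
      _ = ((P i).card : ℝ) * ((P j).card : ℝ) := by rw [Finset.card_product]; push_cast; ring
  set N : Set (SimpleGraph V) := {G : SimpleGraph V | G ≤ Γ ∧ ∀ i, ¬ HasCopy (F i) G} with hN
  set L : ℝ := Real.logb 2 ((Set.ncard N : ℝ)) with hL
  -- the key estimate for each admissible weighted graph S
  have key : ∀ S : Fin k → Fin k → ℝ, (∀ i j, S i j = S j i) → (∀ i j, 0 ≤ S i j) →
      (∀ i j, S i j ≤ clusterW Γ P i j) → (∀ i, tW (F i) S = 0) →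
      eW S / (k:ℝ)^2 * (n:ℝ)^2 - (k:ℝ)*(n:ℝ) ≤ L := by
    intro S hSsym hS0 hSle hSt
    -- the pruned graph G'
    set G' : SimpleGraph V :=
      { Adj := fun u v => Γ.Adj u v ∧ 0 < S (cl u) (cl v)
        symm := by
          refine ⟨fun u v h => ?_⟩
          exact ⟨h.1.symm, by rw [hSsym]; exact h.2⟩
        loopless := ⟨fun v h => Γ.loopless.irrefl v h.1⟩ } with hG'
    have hG'le : G' ≤ Γ := fun u v h => h.1
    -- G' is F-free
    have hfree : ∀ i, ¬ HasCopy (F i) G' := by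
      intro i hcopy
      obtain ⟨f, hf⟩ := hcopy
      have hEne : (F i).edgeFinset.Nonempty := by
        obtain ⟨a, b, hab⟩ := hedge i
        exact ⟨s(a, b), by rwa [SimpleGraph.mem_edgeFinset, SimpleGraph.mem_edgeSet]⟩
      have hpos : 0 < homW (F i) S (fun a => cl (f a)) := by
        apply Finset.prod_pos
        intro e he
        have hadj : (F i).Adj (Quot.out e).1 (Quot.out e).2 := by
          rw [SimpleGraph.mem_edgeFinset] at he
          have h1 : s((Quot.out e).1, (Quot.out e).2) = e := by
            show Quot.mk _ _ = e
            rw [Prod.mk.eta]; exact Quot.out_eq e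
          rwa [← h1, SimpleGraph.mem_edgeSet] at he
        exact (hf _ _ hadj).2
      have hz := homW_eq_zero (F i) S hS0 (by simp [hk]) (hSt i) (fun a => cl (f a))
      rw [hz] at hpos
      exact lt_irrefl _ hpos
    set m : ℕ := G'.edgeFinset.card with hm
    -- spanning subgraphs of G' are all in N
    have h2m : (2:ℝ)^m ≤ (Set.ncard N : ℝ) := by
      set Q : Finset (SimpleGraph V) :=
        Finset.image (fun s : Finset (Sym2 V) => SimpleGraph.fromEdgeSet (s : Set (Sym2 V)))
          G'.edgeFinset.powerset with hQ
      have hedge_eq : ∀ s ∈ G'.edgeFinset.powerset,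
          (SimpleGraph.fromEdgeSet (↑s : Set (Sym2 V))).edgeSet = ↑s := by
        intro s hs
        rw [Finset.mem_powerset] at hs
        rw [SimpleGraph.edgeSet_fromEdgeSet]
        apply Set.Subset.antisymm Set.diff_subset
        intro e he
        exact ⟨he, fun hd => G'.not_isDiag_of_mem_edgeSet
          (SimpleGraph.mem_edgeFinset.mp (hs he)) hd⟩
      have hinj : Set.InjOn (fun s : Finset (Sym2 V) =>
          SimpleGraph.fromEdgeSet ((s : Set (Sym2 V)))) ↑G'.edgeFinset.powerset := by
        intro s hs t ht hst
        have h0 := congrArg SimpleGraph.edgeSet hst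
        rw [hedge_eq s (Finset.mem_coe.mp hs), hedge_eq t (Finset.mem_coe.mp ht)] at h0
        exact_mod_cast Finset.coe_injective h0
      have hQcard : Q.card = 2 ^ m := by
        rw [hQ, Finset.card_image_of_injOn hinj, Finset.card_powerset]
      have hQsub : ↑Q ⊆ N := by
        intro G hG
        rw [hQ] at hG
        simp only [Finset.coe_image, Set.mem_image, Finset.mem_coe] at hG
        obtain ⟨s, hs, rfl⟩ := hG
        have hsle : SimpleGraph.fromEdgeSet (↑s : Set (Sym2 V)) ≤ G' := by
          rw [Finset.mem_powerset] at hs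
          calc SimpleGraph.fromEdgeSet (↑s : Set (Sym2 V))
              ≤ SimpleGraph.fromEdgeSet G'.edgeSet := by
                apply SimpleGraph.fromEdgeSet_mono
                intro e he
                exact SimpleGraph.mem_edgeFinset.mp (hs he)
            _ = G' := SimpleGraph.fromEdgeSet_edgeSet G'
        refine ⟨le_trans hsle hG'le, fun i hcopy => hfree i ?_⟩
        obtain ⟨f, hf⟩ := hcopy
        exact ⟨f, fun u w h => hsle (hf u w h)⟩
      calc (2:ℝ)^m = (Q.card : ℝ) := by rw [hQcard]; push_cast; ring
        _ = ((↑Q : Set (SimpleGraph V)).ncard : ℝ) := by rw [Set.ncard_coe_finset]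
        _ ≤ (Set.ncard N : ℝ) := by
            exact_mod_cast Set.ncard_le_ncard hQsub (Set.toFinite N)
    have hmL : (m:ℝ) ≤ L := by
      have h1 : Real.logb 2 ((2:ℝ)^m) = m := by
        rw [Real.logb_pow, Real.logb_self_eq_one (by norm_num), mul_one]
      rw [hL, ← h1]
      exact Real.logb_le_logb_of_le (by norm_num) (by positivity) h2m
    -- edge counting
    set A : Finset (V × V) := Finset.univ.filter (fun p : V × V => G'.Adj p.1 p.2) with hA
    have hA2m : A.card = 2 * m := by
      have h1 : A.card = ∑ v : V, (A.filter fun p => p.1 = v).card :=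
        Finset.card_eq_sum_card_fiberwise (fun x _ => mem_univ _)
      have h2 : ∀ v : V, (A.filter fun p => p.1 = v).card = G'.degree v := by
        intro v
        have h3 : A.filter (fun p => p.1 = v) = ({v} : Finset V) ×ˢ G'.neighborFinset v := by
          ext ⟨a, b⟩
          simp only [hA, Finset.mem_filter, Finset.mem_univ, true_and, Finset.mem_product,
            Finset.mem_singleton, SimpleGraph.mem_neighborFinset]
          constructor
          · rintro ⟨h, rfl⟩; exact ⟨rfl, h⟩
          · rintro ⟨rfl, h⟩; exact ⟨h, rfl⟩
        rw [h3, Finset.card_product, Finset.card_singleton, one_mul]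
        rfl
      rw [h1]
      simp_rw [h2]
      exact G'.sum_degrees_eq_twice_card_edges
    have hAfib : A.card = ∑ q : Fin k × Fin k,
        (((P q.1) ×ˢ (P q.2)).filter fun p => G'.Adj p.1 p.2).card := by
      have h1 : A.card = ∑ q : Fin k × Fin k,
          (A.filter fun p => (cl p.1, cl p.2) = q).card :=
        Finset.card_eq_sum_card_fiberwise (fun x _ => mem_univ _)
      rw [h1]
      refine Finset.sum_congr rfl fun q _ => ?_
      congr 1
      apply Finset.ext
      rintro ⟨a, b⟩
      simp only [hA, Finset.mem_filter, Finset.mem_univ, true_and, Finset.mem_product,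
        Prod.ext_iff]
      constructor
      · rintro ⟨h, h1, h2⟩
        exact ⟨⟨(hiff a q.1).mp h1, (hiff b q.2).mp h2⟩, h⟩
      · rintro ⟨⟨h1, h2⟩, h⟩
        exact ⟨h, (hiff a q.1).mpr h1, (hiff b q.2).mpr h2⟩
    have hterm : ∀ i j, S i j * (((P i).card : ℝ) * ((P j).card : ℝ)) ≤
        ((((P i) ×ˢ (P j)).filter fun p => G'.Adj p.1 p.2).card : ℝ) := by
      intro i j
      rcases (hS0 i j).eq_or_lt with h | h
      · rw [← h, zero_mul]; exact Nat.cast_nonneg _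
      · have hfe : ((P i) ×ˢ (P j)).filter (fun p => G'.Adj p.1 p.2) =
            ((P i) ×ˢ (P j)).filter (fun p => Γ.Adj p.1 p.2) := by
          apply Finset.filter_congr
          intro ⟨a, b⟩ hab
          rw [Finset.mem_product] at hab
          have ha : cl a = i := hclU a i hab.1
          have hb : cl b = j := hclU b j hab.2
          show (Γ.Adj a b ∧ 0 < S (cl a) (cl b)) ↔ Γ.Adj a b
          rw [ha, hb]
          exact ⟨fun x => x.1, fun x => ⟨x, h⟩⟩
        rw [hfe]
        have hcw : ((((P i) ×ˢ (P j)).filter fun p => Γ.Adj p.1 p.2).card : ℝ) =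
            clusterW Γ P i j * (((P i).card : ℝ) * ((P j).card : ℝ)) := by
          unfold clusterW
          rw [div_mul_cancel₀]
          exact (mul_pos (hPpos i) (hPpos j)).ne'
        rw [hcw]
        exact mul_le_mul_of_nonneg_right (hSle i j) (le_of_lt (mul_pos (hPpos i) (hPpos j)))
    -- put together: A.card ≥ (2 eW S) c²
    set c : ℝ := ((n:ℝ) - k)/k with hcdef
    have hstep : (2 * eW S) * c^2 ≤ (A.card : ℝ) := by
      rw [hAfib]
      push_cast
      have h1 : (2 * eW S) * c^2 = ∑ q : Fin k × Fin k, S q.1 q.2 * (c * c) := by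
        unfold eW
        rw [Fintype.sum_prod_type]
        simp_rw [← Finset.sum_mul]
        ring
      rw [h1]
      apply Finset.sum_le_sum
      intro q _
      calc S q.1 q.2 * (c * c) ≤ S q.1 q.2 * (((P q.1).card : ℝ) * ((P q.2).card : ℝ)) := by
            apply mul_le_mul_of_nonneg_left _ (hS0 q.1 q.2)
            exact mul_le_mul (hPc q.1) (hPc q.2) (le_of_lt hcpos) (le_of_lt (hPpos q.1))
        _ ≤ _ := hterm q.1 q.2
    have hmE : eW S * c^2 ≤ (m:ℝ) := by
      have h1 : (A.card : ℝ) = 2 * m := by exact_mod_cast hA2m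
      nlinarith [hstep]
    -- bounds on eW S
    have hE0 : 0 ≤ eW S := by
      unfold eW
      apply div_nonneg _ (by norm_num)
      exact Finset.sum_nonneg fun i _ => Finset.sum_nonneg fun j _ => hS0 i j
    have hE2 : eW S ≤ (k:ℝ)^2/2 := by
      unfold eW
      apply div_le_div_of_nonneg_right ?_ (by norm_num)
      calc ∑ i, ∑ j, S i j ≤ ∑ _i : Fin k, ∑ _j : Fin k, (1:ℝ) :=
            Finset.sum_le_sum fun i _ => Finset.sum_le_sum fun j _ =>
              le_trans (hSle i j) (hclW1 i j)
        _ = (k:ℝ)^2 := by simp [Finset.sum_const, Finset.card_univ]; ring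
    -- final arithmetic
    have harith : eW S / (k:ℝ)^2 * (n:ℝ)^2 - (k:ℝ)*(n:ℝ) ≤ eW S * c^2 := by
      have hid : eW S / (k:ℝ)^2 * (n:ℝ)^2 - eW S * c^2 = eW S * (2*(n:ℝ) - k)/k := by
        rw [hcdef]
        field_simp
        ring
      have hub : eW S * (2*(n:ℝ) - k)/k ≤ (k:ℝ)*(n:ℝ) := by
        rw [div_le_iff₀ hk0]
        nlinarith [mul_le_mul_of_nonneg_right hE2 (show (0:ℝ) ≤ 2*(n:ℝ) - k by linarith)]
      linarith
    linarith
  -- conclude via csSup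
  set T : Set ℝ := {x : ℝ | ∃ S : Fin k → Fin k → ℝ, (∀ i j, S i j = S j i) ∧
      (∀ i j, 0 ≤ S i j) ∧ (∀ i j, S i j ≤ clusterW Γ P i j) ∧
      (∀ i, tW (F i) S = 0) ∧ x = eW S} with hT
  have hzero : (0:ℝ) ∈ T := by
    refine ⟨fun _ _ => 0, fun _ _ => rfl, fun _ _ => le_refl _, ?_, ?_, ?_⟩
    · intro i j
      unfold clusterW
      positivity
    · intro i
      unfold tW
      rw [Finset.sum_eq_zero, zero_div]
      intro φ _
      unfold homW
      obtain ⟨a, b, hab⟩ := hedge i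
      exact Finset.prod_eq_zero (i := s(a, b))
        (by rwa [SimpleGraph.mem_edgeFinset, SimpleGraph.mem_edgeSet]) rfl
    · unfold eW; simp
  have hub : ∀ x ∈ T, x ≤ (L + (k:ℝ)*(n:ℝ)) * (k:ℝ)^2 / (n:ℝ)^2 := by
    intro x hx
    obtain ⟨S, h1, h2, h3, h4, rfl⟩ := hx
    have hkey := key S h1 h2 h3 h4
    rw [le_div_iff₀ (by positivity)]
    have h5 : eW S * (n:ℝ)^2 = (eW S / (k:ℝ)^2 * (n:ℝ)^2) * (k:ℝ)^2 := by
      field_simp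
    rw [h5]
    nlinarith [sq_nonneg (k:ℝ)]
  have hsup : sSup T ≤ (L + (k:ℝ)*(n:ℝ)) * (k:ℝ)^2 / (n:ℝ)^2 := csSup_le ⟨0, hzero⟩ hub
  have hfin : sSup T / (k:ℝ)^2 * (n:ℝ)^2 ≤ L + (k:ℝ)*(n:ℝ) := by
    calc sSup T / (k:ℝ)^2 * (n:ℝ)^2
        ≤ ((L + (k:ℝ)*(n:ℝ)) * (k:ℝ)^2 / (n:ℝ)^2) / (k:ℝ)^2 * (n:ℝ)^2 := by
          gcongr
      _ = L + (k:ℝ)*(n:ℝ) := by field_simp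
  linarith
end
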